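/- arXiv:0710.3877 — 2 statements merged into one kernel-verified Lean document; each statement's English description precedes it below -/
import Mathlib

section
/- Let G be a finite group of order n such that every nontrivial complex representation of G has dimension at least k. Let A₁, A₂, A₃, A₁₂, A₁₃, A₂₃ and A₁₂₃ be subsets of G of sizes p₁n, p₂n, p₃n, p₁₂n, p₁₃n, p₂₃n and p₁₂₃n respectively. Then, provided that each of the products p₁p₂p₁₂, p₁p₃p₁₃, p₁p₂₃p₁₂₃ and p₂p₃p₂₃p₁₂p₁₃p₁₂₃ is at least 16/k, there exist elements x₁ ∈ A₁, x₂ ∈ A₂ and x₃ ∈ A₃ such that x₁x₂ ∈ A₁₂, x₁x₃ ∈ A₁₃, x₂x₃ ∈ A₂₃ and x₁x₂x₃ ∈ A₁₂₃. -/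
open scoped ComplexConjugate
open Finset

noncomputable section
namespace GowersAux

variable {G : Type} [Group G] [Fintype G]

abbrev E (G : Type) [Fintype G] := EuclideanSpace ℂ G

/-- Convolution operator: `(conv f h) x = ∑ y, f y * h (y⁻¹ * x)`. -/
def conv (f : G → ℂ) : E G →ₗ[ℂ] E G where
  toFun h := WithLp.toLp 2 (fun x => ∑ y, f y * h (y⁻¹ * x))
  map_add' h₁ h₂ := by
    ext x
    simp [mul_add, Finset.sum_add_distrib]
  map_smul' c h := by
    ext x
    simp only [PiLp.smul_apply, smul_eq_mul, RingHom.id_apply, Finset.mul_sum]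
    exact Finset.sum_congr rfl fun y _ => by ring

lemma conv_apply (f : G → ℂ) (h : E G) (x : G) :
    conv f h x = ∑ y, f y * h (y⁻¹ * x) := rfl

/-- Right translation operator `(rt t h) x = h (x * t)`. -/
def rt (t : G) : E G →ₗ[ℂ] E G where
  toFun h := WithLp.toLp 2 (fun x => h (x * t))
  map_add' h₁ h₂ := by ext x; simp
  map_smul' c h := by ext x; simp

lemma rt_apply (t : G) (h : E G) (x : G) : rt t h x = h (x * t) := rfl

lemma conv_rt_comm (f : G → ℂ) (t : G) (h : E G) :
    conv f (rt t h) = rt t (conv f h) := by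
  ext x
  show ∑ y, f y * h (y⁻¹ * x * t) = ∑ y, f y * h (y⁻¹ * (x * t))
  exact Finset.sum_congr rfl fun y _ => by rw [mul_assoc]

lemma sum_mulLeft {M : Type*} [AddCommMonoid M] (t : G) (F : G → M) :
    ∑ x, F (t * x) = ∑ x, F x :=
  Equiv.sum_comp (Equiv.mulLeft t) F

lemma sum_inv {M : Type*} [AddCommMonoid M] (F : G → M) : ∑ x, F x⁻¹ = ∑ x, F x :=
  Equiv.sum_comp (Equiv.inv G) F

/-- The adjoint convolution. -/
def convT (f : G → ℂ) : E G →ₗ[ℂ] E G := conv (fun y => conj (f y⁻¹))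

lemma inner_conv_left (f : G → ℂ) (u v : E G) :
    (inner ℂ (conv f u) v : ℂ) = inner ℂ u (convT f v) := by
  have L : (inner ℂ (conv f u) v : ℂ)
      = ∑ y, ∑ z, conj (f y) * (conj (u z) * v (y * z)) := by
    simp only [PiLp.inner_apply, RCLike.inner_apply', conv_apply, map_sum, map_mul,
      Finset.sum_mul]
    rw [Finset.sum_comm]
    refine Finset.sum_congr rfl fun y _ => ?_
    rw [← sum_mulLeft y⁻¹ (fun z => conj (f y) * (conj (u z) * v (y * z)))]
    refine Finset.sum_congr rfl fun x _ => ?_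
    rw [mul_inv_cancel_left]
    ring
  have R : (inner ℂ u (convT f v) : ℂ)
      = ∑ y, ∑ z, conj (f y) * (conj (u z) * v (y * z)) := by
    simp only [PiLp.inner_apply, RCLike.inner_apply', convT, conv_apply, Finset.mul_sum]
    rw [Finset.sum_comm]
    rw [← sum_inv (fun y => ∑ z, conj (f y) * (conj (u z) * v (y * z)))]
    refine Finset.sum_congr rfl fun y _ => Finset.sum_congr rfl fun z _ => by ring
  rw [L, R]

lemma inner_convT_left (f : G → ℂ) (u v : E G) :
    (inner ℂ (convT f u) v : ℂ) = inner ℂ u (conv f v) := by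
  have h := inner_conv_left (fun y => conj (f y⁻¹)) u v
  have e : convT (fun y => conj (f y⁻¹)) = conv f := by
    simp only [convT, inv_inv, Complex.conj_conj]
  rw [e] at h
  exact h

/-- The positive operator `S = T* T`. -/
def opS (f : G → ℂ) : E G →ₗ[ℂ] E G := (convT f).comp (conv f)

lemma inner_opS (f : G → ℂ) (u v : E G) :
    (inner ℂ u (opS f v) : ℂ) = inner ℂ (conv f u) (conv f v) := by
  simp only [opS, LinearMap.comp_apply]
  exact (inner_conv_left f u ((conv f) v)).symm

lemma opS_symm (f : G → ℂ) : (opS f).IsSymmetric := by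
  intro x y
  simp only [opS, LinearMap.comp_apply]
  rw [inner_convT_left, ← inner_conv_left]

lemma opS_rt_comm (f : G → ℂ) (t : G) (h : E G) :
    opS f (rt t h) = rt t (opS f h) := by
  simp only [opS, LinearMap.comp_apply, convT, conv_rt_comm]


section Trace

variable [DecidableEq G]

lemma conv_basis (f : G → ℂ) (x w : G) :
    conv f ((PiLp.basisFun 2 ℂ G) x) w = f (w * x⁻¹) := by
  rw [conv_apply]
  rw [show (∑ y, f y * ((PiLp.basisFun 2 ℂ G) x) (y⁻¹ * w))
      = ∑ y, (if y = w * x⁻¹ then f y else 0) from ?_]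
  · simp
  refine Finset.sum_congr rfl fun y _ => ?_
  simp only [PiLp.basisFun_apply, PiLp.ofLp_single, Pi.single_apply]
  by_cases hy : y = w * x⁻¹
  · subst hy
    simp [mul_assoc]
  · have : ¬ (x = y⁻¹ * w) := by
      intro hx
      apply hy
      rw [hx]
      group
    simp only [mul_ite, mul_one, mul_zero, if_neg hy, ite_eq_right_iff]
    exact fun hx => absurd hx.symm this

lemma trace_opS (f : G → ℂ) :
    LinearMap.trace ℂ (E G) (opS f) = (Fintype.card G : ℂ) * ∑ z, conj (f z) * f z := by
  rw [LinearMap.trace_eq_matrix_trace ℂ (PiLp.basisFun 2 ℂ G)]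
  rw [Matrix.trace]
  have hdiag : ∀ x : G, (LinearMap.toMatrix (PiLp.basisFun 2 ℂ G) (PiLp.basisFun 2 ℂ G)
      (opS f)) x x = ∑ z, conj (f z) * f z := by
    intro x
    rw [LinearMap.toMatrix_apply, PiLp.basisFun_repr]
    show (conv (fun y => conj (f y⁻¹)) (conv f ((PiLp.basisFun 2 ℂ G) x))) x = _
    rw [conv_apply]
    rw [← sum_inv (fun z => conj (f z) * f z)]
    refine Finset.sum_congr rfl fun y _ => ?_
    rw [conv_basis]
    congr 1
    group
  simp only [Matrix.diag_apply, hdiag]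
  rw [Finset.sum_const, card_univ, nsmul_eq_mul]

end Trace

section OpBound

variable [DecidableEq G]

lemma normsq_eq (u : E G) : ‖u‖ ^ 2 = ∑ x, ‖u x‖ ^ 2 := by
  rw [EuclideanSpace.norm_eq, Real.sq_sqrt]
  positivity

theorem op_norm_bound (k : ℕ) (hk : 0 < k)
    (hrep : ∀ (d : ℕ) (ρ : G →* Matrix.GeneralLinearGroup (Fin d) ℂ),
      (∃ g, ρ g ≠ 1) → k ≤ d)
    (f : G → ℂ) (hf : ∑ x, f x = 0) (h : E G) :
    (k : ℝ) * ‖conv f h‖ ^ 2 ≤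
      (Fintype.card G : ℝ) * (∑ x, ‖f x‖ ^ 2) * ‖h‖ ^ 2 := by
  classical
  set n := Fintype.card G with hndef
  have hnpos : 0 < n := Fintype.card_pos
  have hn : Module.finrank ℂ (E G) = n := finrank_euclideanSpace.trans rfl
  have hS := opS_symm f
  set b := hS.eigenvectorBasis hn with hbdef
  set μ := hS.eigenvalues hn with hmudef
  have hSb : ∀ i, opS f (b i) = (μ i : ℂ) • b i := fun i => hS.apply_eigenvectorBasis hn i
  have hμval : ∀ i, (μ i : ℂ) = (‖conv f (b i)‖ ^ 2 : ℝ) := by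
    intro i
    have h1 : (inner ℂ (b i) (opS f (b i)) : ℂ) = (μ i : ℂ) := by
      rw [hSb i, inner_smul_right, inner_self_eq_norm_sq_to_K]
      have : ‖b i‖ = 1 := b.orthonormal.1 i
      rw [this]
      norm_num
    rw [← h1, inner_opS, inner_self_eq_norm_sq_to_K]
    norm_cast
  have hμ0 : ∀ i, 0 ≤ μ i := by
    intro i
    have := hμval i
    have h2 : μ i = ‖conv f (b i)‖ ^ 2 := by exact_mod_cast this
    rw [h2]; positivity
  have hNe : Nonempty (Fin n) := ⟨⟨0, hnpos⟩⟩
  have hne : (Finset.univ : Finset (Fin n)).Nonempty := Finset.univ_nonempty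
  set lam := Finset.univ.sup' hne μ with hlamdef
  -- trace identity
  have htrace : ∑ i, μ i = (n : ℝ) * ∑ x, ‖f x‖ ^ 2 := by
    have e1 : LinearMap.trace ℂ (E G) (opS f) = ∑ i, (μ i : ℂ) := by
      rw [LinearMap.trace_eq_matrix_trace ℂ b.toBasis, Matrix.trace]
      refine Finset.sum_congr rfl fun i _ => ?_
      rw [Matrix.diag_apply, LinearMap.toMatrix_apply]
      simp only [OrthonormalBasis.coe_toBasis]
      rw [hSb i, map_smul]
      simp [Module.Basis.repr_self]
    have e2 := trace_opS f
    rw [e1] at e2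
    have e3 : (∑ i, (μ i : ℂ)) = ((n : ℝ) * ∑ x, ‖f x‖ ^ 2 : ℝ) := by
      rw [e2]
      push_cast
      congr 1
      refine Finset.sum_congr rfl fun z _ => ?_
      rw [RCLike.conj_mul]
      norm_cast
    exact_mod_cast e3
  -- Rayleigh bound
  have hray : ‖conv f h‖ ^ 2 ≤ lam * ‖h‖ ^ 2 := by
    have hcoord : ∀ i, b.repr (opS f h) i = (μ i : ℂ) * b.repr h i :=
      fun i => hS.eigenvectorBasis_apply_self_apply hn h i
    have eA : (inner ℂ (conv f h) (conv f h) : ℂ)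
        = ((∑ i, μ i * Complex.normSq (b.repr h i) : ℝ) : ℂ) := by
      rw [← inner_opS, ← LinearIsometryEquiv.inner_map_map b.repr h (opS f h),
        PiLp.inner_apply]
      push_cast
      refine Finset.sum_congr rfl fun i _ => ?_
      rw [RCLike.inner_apply', hcoord i, ← Complex.mul_conj]
      ring
    have eB : (inner ℂ (conv f h) (conv f h) : ℂ) = ((‖conv f h‖ ^ 2 : ℝ) : ℂ) :=
      (inner_self_eq_norm_sq_to_K _).trans (by push_cast; rfl)
    have e1 : ‖conv f h‖ ^ 2 = ∑ i, μ i * Complex.normSq (b.repr h i) :=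
      Complex.ofReal_injective (eB.symm.trans eA)
    have e2 : ‖h‖ ^ 2 = ∑ i, Complex.normSq (b.repr h i) := by
      rw [← b.repr.norm_map h, EuclideanSpace.norm_eq, Real.sq_sqrt (by positivity)]
      refine Finset.sum_congr rfl fun i _ => ?_
      rw [Complex.sq_norm]
    rw [e1, e2, Finset.mul_sum]
    refine Finset.sum_le_sum fun i _ => ?_
    exact mul_le_mul_of_nonneg_right (Finset.le_sup' μ (Finset.mem_univ i))
      (Complex.normSq_nonneg _)
  -- eigenvalue bound
  have hlam_n : (k : ℝ) * lam ≤ (n : ℝ) * ∑ x, ‖f x‖ ^ 2 := by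
    obtain ⟨i₀, -, hi₀⟩ := Finset.exists_mem_eq_sup' hne μ
    have hSig0 : (0:ℝ) ≤ ∑ x, ‖f x‖ ^ 2 := by positivity
    rcases le_or_gt lam 0 with hl0 | hlampos
    · have : (k:ℝ) * lam ≤ 0 := mul_nonpos_of_nonneg_of_nonpos (by positivity) hl0
      exact this.trans (by positivity)
    · set Eig : Submodule ℂ (E G) :=
        Module.End.eigenspace (opS f : Module.End ℂ (E G)) (lam : ℂ) with hEigdef
      have hmem : ∀ v : E G, v ∈ Eig ↔ opS f v = (lam:ℂ) • v :=
        fun v => Module.End.mem_eigenspace_iff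
      have hμi₀ : μ i₀ = lam := by rw [hlamdef, hi₀]
      have hb0 : b i₀ ∈ Eig := by
        rw [hmem, hSb i₀, hμi₀]
      have hmaps : ∀ t : G, ∀ v ∈ Eig, rt t v ∈ Eig := by
        intro t v hv
        rw [hmem] at hv ⊢
        rw [opS_rt_comm, hv, map_smul]
      set d := Module.finrank ℂ Eig with hddef
      set cb : Module.Basis (Fin d) ℂ Eig := Module.finBasis ℂ Eig with hcbdef
      set res : G → (Eig →ₗ[ℂ] Eig) := fun t => (rt t).restrict (hmaps t) with hresdef
      have hres_comp : ∀ s t : G, res (s * t) = (res s).comp (res t) := by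
        intro s t
        refine LinearMap.ext fun v => Subtype.ext ?_
        simp only [hresdef, LinearMap.comp_apply, LinearMap.restrict_coe_apply]
        ext x
        show (v : E G) (x * (s * t)) = (v : E G) (x * s * t)
        rw [mul_assoc]
      have hres_one : res 1 = LinearMap.id := by
        refine LinearMap.ext fun v => Subtype.ext ?_
        simp only [hresdef, LinearMap.restrict_coe_apply, LinearMap.id_coe, id_eq]
        ext x
        show (v : E G) (x * 1) = (v : E G) x
        rw [mul_one]
      set M : G → Matrix (Fin d) (Fin d) ℂ := fun t => LinearMap.toMatrix cb cb (res t)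
        with hMdef
      have hM_mul : ∀ s t, M s * M t = M (s * t) := by
        intro s t
        show _ = LinearMap.toMatrix cb cb (res (s * t))
        rw [hres_comp s t, LinearMap.toMatrix_comp cb cb cb]
      have hM_one : M 1 = 1 := by
        show LinearMap.toMatrix cb cb (res 1) = 1
        rw [hres_one, LinearMap.toMatrix_id]
      let ρ : G →* Matrix.GeneralLinearGroup (Fin d) ℂ :=
        { toFun := fun t => ⟨M t, M t⁻¹,
            by rw [hM_mul, mul_inv_cancel, hM_one],
            by rw [hM_mul, inv_mul_cancel, hM_one]⟩
          map_one' := Units.ext hM_one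
          map_mul' := fun s t => Units.ext (hM_mul s t).symm }
      have hbne : b i₀ ≠ 0 := by
        intro hz
        have h1 : ‖b i₀‖ = 1 := b.orthonormal.1 i₀
        rw [hz, norm_zero] at h1
        norm_num at h1
      have hd : k ≤ d := by
        refine hrep d ρ ?_
        by_contra hc
        push_neg at hc
        have hres_id : ∀ t, res t = LinearMap.id := by
          intro t
          have h1 : M t = 1 := congrArg Units.val (hc t)
          refine (LinearMap.toMatrix cb cb).injective ?_
          show M t = LinearMap.toMatrix cb cb LinearMap.id
          rw [h1, LinearMap.toMatrix_id]
        have hconstv : ∀ x, (b i₀) x = (b i₀) 1 := by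
          intro x
          have h2 := congrArg Subtype.val (LinearMap.ext_iff.mp (hres_id x) ⟨b i₀, hb0⟩)
          have h3 := congrFun (congrArg WithLp.ofLp h2) 1
          show (b i₀) x = _
          rw [show (b i₀) x = (b i₀) (1 * x) by rw [one_mul]]
          exact h3
        have hbz : conv f (b i₀) = 0 := by
          ext x
          rw [conv_apply]
          have : ∀ y : G, (b i₀) (y⁻¹ * x) = (b i₀) 1 := fun y => hconstv _
          simp only [this]
          rw [← Finset.sum_mul, hf, zero_mul]
          rfl
        have hz : opS f (b i₀) = 0 := by
          rw [opS, LinearMap.comp_apply, hbz, map_zero]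
        rw [hSb i₀, hμi₀] at hz
        have hlamne : (lam:ℂ) ≠ 0 := by
          exact_mod_cast ne_of_gt hlampos
        exact smul_ne_zero hlamne hbne hz
      set fil := Finset.univ.filter (fun i => μ i = lam) with hfildef
      have hspan : Eig ≤ Submodule.span ℂ ((fil.image b : Finset (E G)) : Set (E G)) := by
        intro v hv
        have hc0 : ∀ i, μ i ≠ lam → b.repr v i = 0 := by
          intro i hi
          have h1 : b.repr (opS f v) i = (μ i:ℂ) * b.repr v i :=
            hS.eigenvectorBasis_apply_self_apply hn v i
          have h2 : opS f v = (lam:ℂ) • v := (hmem v).mp hv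
          rw [h2, map_smul] at h1
          have h3 : (lam:ℂ) * b.repr v i = (μ i:ℂ) * b.repr v i := h1
          by_contra hne0
          have h4 := mul_right_cancel₀ hne0 h3
          exact hi (Complex.ofReal_injective h4).symm
        have hv2 : v = ∑ i ∈ fil, b.repr v i • b i := by
          rw [hfildef]
          rw [Finset.sum_filter_of_ne (fun i _ hne0 => by
            by_contra hi
            exact hne0 (by rw [hc0 i hi, zero_smul]))]
          exact (b.sum_repr v).symm
        rw [hv2]
        refine Submodule.sum_mem _ fun i hi => Submodule.smul_mem _ _ ?_
        refine Submodule.subset_span ?_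
        rw [Finset.coe_image]
        exact Set.mem_image_of_mem b (by exact_mod_cast hi)
      have hcnt : d ≤ fil.card := by
        calc d ≤ Module.finrank ℂ (Submodule.span ℂ ((fil.image b : Finset (E G)) : Set (E G))) :=
              Submodule.finrank_mono hspan
          _ ≤ (fil.image b).card := finrank_span_finset_le_card _
          _ ≤ fil.card := Finset.card_image_le
      have hsum : (fil.card : ℝ) * lam ≤ ∑ i, μ i := by
        have h1 : ∑ i ∈ fil, μ i = fil.card * lam := by
          rw [Finset.sum_congr rfl (fun i hi => (Finset.mem_filter.mp hi).2),
            Finset.sum_const, nsmul_eq_mul]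
        rw [← h1]
        exact Finset.sum_le_sum_of_subset_of_nonneg (Finset.subset_univ _)
          (fun i _ _ => hμ0 i)
      have hkcnt : (k:ℝ) ≤ (fil.card : ℝ) := by exact_mod_cast hd.trans hcnt
      calc (k:ℝ) * lam ≤ (fil.card:ℝ) * lam :=
            mul_le_mul_of_nonneg_right hkcnt (le_of_lt hlampos)
        _ ≤ ∑ i, μ i := hsum
        _ = (n : ℝ) * ∑ x, ‖f x‖ ^ 2 := htrace
  -- combine
  have hh2 : (0 : ℝ) ≤ ‖h‖ ^ 2 := by positivity
  calc (k : ℝ) * ‖conv f h‖ ^ 2 ≤ (k : ℝ) * (lam * ‖h‖ ^ 2) := by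
        refine mul_le_mul_of_nonneg_left hray (by positivity)
    _ = ((k : ℝ) * lam) * ‖h‖ ^ 2 := by ring
    _ ≤ ((n : ℝ) * ∑ x, ‖f x‖ ^ 2) * ‖h‖ ^ 2 := mul_le_mul_of_nonneg_right hlam_n hh2

end OpBound

section Counting

variable [DecidableEq G]

/-- number of `z ∈ S` with `x * z ∈ P` -/
def cnt (S P : Finset G) (x : G) : ℕ := (S.filter (fun z => x * z ∈ P)).card

theorem dev (k : ℕ) (hk : 0 < k)
    (hrep : ∀ (d : ℕ) (ρ : G →* Matrix.GeneralLinearGroup (Fin d) ℂ),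
      (∃ g, ρ g ≠ 1) → k ≤ d)
    (S P : Finset G) :
    (k : ℝ) * ∑ x : G, ((cnt S P x : ℝ)
        - (S.card : ℝ) * P.card / (Fintype.card G)) ^ 2
      ≤ (Fintype.card G : ℝ) * P.card * S.card := by
  classical
  set n := Fintype.card G with hndef
  have hn0 : (0:ℝ) < n := by exact_mod_cast Fintype.card_pos
  set α : ℝ := (P.card : ℝ) / n with hα
  have hαn : α * n = P.card := by rw [hα]; field_simp
  have hα0 : 0 ≤ α := by positivity
  set g : G → ℝ := fun y => (if y ∈ P then (1:ℝ) else 0) - α with hgdef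
  set f : G → ℂ := fun y => ((g y : ℝ) : ℂ) with hfdef
  set h : E G := WithLp.toLp 2 (fun z => if z⁻¹ ∈ S then (1:ℂ) else 0 : G → ℂ) with hhdef
  have hsum_ite : ∑ y : G, (if y ∈ P then (1:ℝ) else 0) = P.card := by
    rw [Finset.sum_boole]
    congr 1
    exact congrArg Finset.card (Finset.filter_univ_mem P)
  have hfsum : ∑ x, f x = 0 := by
    rw [hfdef]
    rw [show (∑ x : G, ((g x : ℝ) : ℂ)) = ((∑ x : G, g x : ℝ) : ℂ) from
      (Complex.ofReal_sum _ _).symm]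
    rw [hgdef]
    rw [show (∑ x : G, ((if x ∈ P then (1:ℝ) else 0) - α))
        = (∑ x : G, (if x ∈ P then (1:ℝ) else 0)) - (Fintype.card G) * α by
      rw [Finset.sum_sub_distrib, Finset.sum_const, Finset.card_univ, nsmul_eq_mul]]
    rw [hsum_ite]
    rw [show (P.card : ℝ) - (Fintype.card G) * α = 0 by
      rw [← hαn]; push_cast [hndef]; ring]
    norm_num
  have hPn : (P.card : ℝ) ≤ n := by exact_mod_cast Finset.card_le_univ P
  have hSig : ∑ x, ‖f x‖ ^ 2 ≤ (P.card : ℝ) := by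
    have e : ∀ x : G, ‖f x‖ ^ 2 = if x ∈ P then (1-α)^2 else α^2 := by
      intro x
      rw [hfdef]
      simp only [Complex.norm_real]
      by_cases hx : x ∈ P <;> simp [hgdef, hx, Real.norm_eq_abs, sq_abs]
    rw [Finset.sum_congr rfl fun x _ => e x, Finset.sum_ite, Finset.sum_const,
      Finset.sum_const]
    have c1 : (Finset.univ.filter (fun x : G => x ∈ P)).card = P.card :=
      congrArg Finset.card (Finset.filter_univ_mem P)
    have c2 : (Finset.univ.filter (fun x : G => ¬ x ∈ P)).card = Fintype.card G - P.card := by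
      rw [Finset.filter_not, Finset.filter_univ_mem, Finset.card_sdiff_of_subset (Finset.subset_univ P),
        Finset.card_univ]
    rw [c1, c2, nsmul_eq_mul, nsmul_eq_mul]
    have c3 : ((Fintype.card G - P.card : ℕ) : ℝ) = n - P.card := by
      push_cast [Nat.cast_sub (Finset.card_le_univ P), hndef]
      rfl
    rw [c3]
    have hp0 : (0:ℝ) ≤ P.card := by positivity
    nlinarith [mul_nonneg hp0 hα0, sq_nonneg α, sq_nonneg (1-α)]
  have hh2 : ∑ x, ‖h x‖ ^ 2 = (S.card : ℝ) := by
    have e : ∀ z : G, ‖h z‖ ^ 2 = (if z⁻¹ ∈ S then (1:ℝ) else 0) := by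
      intro z
      simp only [hhdef]
      by_cases hz : z⁻¹ ∈ S <;> simp [hz]
    rw [Finset.sum_congr rfl fun z _ => e z,
      sum_inv (fun z => if z ∈ S then (1:ℝ) else 0)]
    rw [Finset.sum_boole]
    congr 1
    exact congrArg Finset.card (Finset.filter_univ_mem S)
  have hgx : ∀ x : G, conv f h x = (((cnt S P x : ℝ) - α * S.card : ℝ) : ℂ) := by
    intro x
    rw [conv_apply]
    have e1 : ∀ y : G, h (y⁻¹ * x) = if x⁻¹ * y ∈ S then (1:ℂ) else 0 := by
      intro y
      simp only [hhdef, mul_inv_rev, inv_inv]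
    rw [Finset.sum_congr rfl fun y _ => by rw [e1 y, mul_ite, mul_one, mul_zero]]
    rw [← sum_mulLeft x (fun y => if x⁻¹ * y ∈ S then f y else 0)]
    rw [Finset.sum_congr rfl (fun z _ => by rw [inv_mul_cancel_left] :
      ∀ z ∈ Finset.univ, (if x⁻¹ * (x * z) ∈ S then f (x * z) else 0)
        = if z ∈ S then f (x * z) else 0)]
    rw [Finset.sum_ite_mem, Finset.univ_inter]
    rw [show (∑ z ∈ S, f (x * z)) = ((∑ z ∈ S, g (x * z) : ℝ) : ℂ) from
      (Complex.ofReal_sum _ _).symm]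
    congr 1
    rw [hgdef]
    rw [show (∑ z ∈ S, ((if x * z ∈ P then (1:ℝ) else 0) - α))
        = (∑ z ∈ S, (if x * z ∈ P then (1:ℝ) else 0)) - S.card * α by
      rw [Finset.sum_sub_distrib, Finset.sum_const, nsmul_eq_mul]]
    rw [Finset.sum_boole]
    rw [cnt]
    ring
  have hmain := op_norm_bound k hk hrep f hfsum h
  have hnc : ‖conv f h‖ ^ 2
      = ∑ x : G, ((cnt S P x : ℝ) - (S.card : ℝ) * P.card / n) ^ 2 := by
    rw [normsq_eq]
    refine Finset.sum_congr rfl fun x _ => ?_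
    rw [hgx x, Complex.norm_real, Real.norm_eq_abs, sq_abs]
    congr 1
    rw [hα]
    ring
  have hhn : ‖h‖ ^ 2 = (S.card : ℝ) := by rw [normsq_eq]; exact hh2
  rw [hnc, hhn] at hmain
  calc (k : ℝ) * ∑ x : G, ((cnt S P x : ℝ) - (S.card : ℝ) * P.card / n) ^ 2
      ≤ (n : ℝ) * (∑ x, ‖f x‖ ^ 2) * S.card := hmain
    _ ≤ (n : ℝ) * P.card * S.card := by
        have hs0 : (0:ℝ) ≤ (S.card : ℝ) := by positivity
        exact mul_le_mul_of_nonneg_right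
          (mul_le_mul_of_nonneg_left hSig (le_of_lt hn0)) hs0

end Counting

section Combin

variable [DecidableEq G]

theorem exists_triple (k : ℕ) (hk : 0 < k)
    (hrep : ∀ (d : ℕ) (ρ : G →* Matrix.GeneralLinearGroup (Fin d) ℂ),
      (∃ g, ρ g ≠ 1) → k ≤ d)
    (B C D : Finset G)
    (hBCD : (Fintype.card G : ℝ)^3 / k < (B.card : ℝ) * C.card * D.card) :
    ∃ b ∈ B, ∃ c ∈ C, b * c ∈ D := by
  classical
  set N : ℝ := (Fintype.card G : ℝ) with hNdef
  have hN0 : (0:ℝ) < N := by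
    rw [hNdef]; exact_mod_cast Fintype.card_pos
  have hK0 : (0:ℝ) < k := by exact_mod_cast hk
  have hprod : (0:ℝ) < (B.card : ℝ) * C.card * D.card :=
    lt_trans (by positivity) hBCD
  have hB0 : (0:ℝ) < B.card := by
    rcases Nat.eq_zero_or_pos B.card with h0 | h0
    · rw [h0] at hprod; norm_num at hprod
    · exact_mod_cast h0
  have hC0 : (0:ℝ) < C.card := by
    rcases Nat.eq_zero_or_pos C.card with h0 | h0
    · rw [h0] at hprod; norm_num at hprod
    · exact_mod_cast h0
  have hD0 : (0:ℝ) < D.card := by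
    rcases Nat.eq_zero_or_pos D.card with h0 | h0
    · rw [h0] at hprod; norm_num at hprod
    · exact_mod_cast h0
  by_contra hno
  push_neg at hno
  have hcnt0 : ∀ x ∈ B, cnt C D x = 0 := by
    intro x hx
    rw [cnt, Finset.card_eq_zero, Finset.filter_eq_empty_iff]
    intro z hz
    exact hno x hx z hz
  set E : ℝ := (C.card:ℝ) * D.card / N with hEdef
  have hE0 : (0:ℝ) < E := by rw [hEdef]; positivity
  have hdev := dev k hk hrep C D
  have hsub : (B.card : ℝ) * E^2 ≤ ∑ x : G, ((cnt C D x : ℝ) - E)^2 := by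
    calc (B.card:ℝ) * E^2 = ∑ _x ∈ B, E^2 := by rw [Finset.sum_const, nsmul_eq_mul]
      _ ≤ ∑ x ∈ B, ((cnt C D x:ℝ) - E)^2 := by
          refine Finset.sum_le_sum fun x hx => le_of_eq ?_
          rw [hcnt0 x hx]
          push_cast
          ring
      _ ≤ ∑ x : G, ((cnt C D x:ℝ) - E)^2 :=
          Finset.sum_le_sum_of_subset_of_nonneg (Finset.subset_univ B)
            (fun x _ _ => sq_nonneg _)
  have h1 : (k:ℝ) * ((B.card:ℝ) * E^2) ≤ N * D.card * C.card :=
    le_trans (mul_le_mul_of_nonneg_left hsub (le_of_lt hK0)) hdev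
  have e : E^2 * N^2 = (C.card:ℝ)^2 * (D.card:ℝ)^2 := by
    rw [hEdef]
    field_simp
  have h4 := mul_le_mul_of_nonneg_right h1 (le_of_lt (by positivity : (0:ℝ) < N^2))
  have h5 : (k:ℝ) * (B.card:ℝ) * ((C.card:ℝ)^2 * (D.card:ℝ)^2)
      ≤ N^3 * ((D.card:ℝ) * (C.card:ℝ)) := by
    calc (k:ℝ) * (B.card:ℝ) * ((C.card:ℝ)^2 * (D.card:ℝ)^2)
        = (k:ℝ) * ((B.card:ℝ) * (E^2 * N^2)) := by rw [e]; ring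
      _ = (k:ℝ) * ((B.card:ℝ) * E^2) * N^2 := by ring
      _ ≤ N * D.card * C.card * N^2 := h4
      _ = N^3 * ((D.card:ℝ) * (C.card:ℝ)) := by ring
  have h6 : ((B.card:ℝ) * C.card * D.card * k) * ((C.card:ℝ) * D.card)
      ≤ N^3 * ((C.card:ℝ) * D.card) := by
    calc ((B.card:ℝ) * C.card * D.card * k) * ((C.card:ℝ) * D.card)
        = (k:ℝ) * (B.card:ℝ) * ((C.card:ℝ)^2 * (D.card:ℝ)^2) := by ring
      _ ≤ N^3 * ((D.card:ℝ) * (C.card:ℝ)) := h5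
      _ = N^3 * ((C.card:ℝ) * D.card) := by ring
  have h7 : (B.card:ℝ) * C.card * D.card * k ≤ N^3 :=
    le_of_mul_le_mul_right h6 (by positivity)
  have h8 : (B.card:ℝ) * C.card * D.card ≤ N^3 / k := (le_div_iff₀ hK0).mpr h7
  exact absurd h8 (not_le.mpr hBCD)

theorem bad_small (k : ℕ) (hk : 0 < k)
    (hrep : ∀ (d : ℕ) (ρ : G →* Matrix.GeneralLinearGroup (Fin d) ℂ),
      (∃ g, ρ g ≠ 1) → k ≤ d)
    (S P : Finset G) (hS : (0:ℝ) < S.card) (hP : (0:ℝ) < P.card) :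
    ((Finset.univ.filter (fun x : G =>
        (cnt S P x : ℝ) ≤ (S.card:ℝ) * P.card / (2 * Fintype.card G))).card : ℝ)
      ≤ 4 * (Fintype.card G:ℝ)^3 / ((k:ℝ) * S.card * P.card) := by
  classical
  set N : ℝ := (Fintype.card G : ℝ) with hNdef
  have hN0 : (0:ℝ) < N := by
    rw [hNdef]; exact_mod_cast Fintype.card_pos
  have hK0 : (0:ℝ) < k := by exact_mod_cast hk
  set E : ℝ := (S.card:ℝ) * P.card / N with hEdef
  have hE0 : (0:ℝ) < E := by rw [hEdef]; positivity
  set bad := Finset.univ.filter (fun x : G =>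
      (cnt S P x : ℝ) ≤ (S.card:ℝ) * P.card / (2 * N)) with hbaddef
  have hdev := dev k hk hrep S P
  have hterm : ∀ x ∈ bad, (E/2)^2 ≤ ((cnt S P x:ℝ) - E)^2 := by
    intro x hx
    have hx' : (cnt S P x : ℝ) ≤ (S.card:ℝ) * P.card / (2 * N) :=
      (Finset.mem_filter.mp hx).2
    have hhalf : (S.card:ℝ) * P.card / (2 * N) = E / 2 := by
      rw [hEdef]; ring
    rw [hhalf] at hx'
    have hcnt0 : (0:ℝ) ≤ (cnt S P x : ℝ) := by positivity
    have h2 : E/2 ≤ E - (cnt S P x : ℝ) := by linarith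
    calc (E/2)^2 ≤ (E - (cnt S P x : ℝ))^2 := by
          exact pow_le_pow_left₀ (by positivity) h2 2
      _ = ((cnt S P x:ℝ) - E)^2 := by ring
  have hsum : (bad.card:ℝ) * (E/2)^2 ≤ ∑ x : G, ((cnt S P x:ℝ) - E)^2 := by
    calc (bad.card:ℝ) * (E/2)^2 = ∑ _x ∈ bad, (E/2)^2 := by
          rw [Finset.sum_const, nsmul_eq_mul]
      _ ≤ ∑ x ∈ bad, ((cnt S P x:ℝ) - E)^2 := Finset.sum_le_sum hterm
      _ ≤ ∑ x : G, ((cnt S P x:ℝ) - E)^2 :=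
          Finset.sum_le_sum_of_subset_of_nonneg (Finset.subset_univ bad)
            (fun x _ _ => sq_nonneg _)
  have key : (k:ℝ) * ((bad.card:ℝ) * (E/2)^2) ≤ N * P.card * S.card :=
    le_trans (mul_le_mul_of_nonneg_left hsum (le_of_lt hK0)) hdev
  have e : (E/2)^2 * N^2 * 4 = (S.card:ℝ)^2 * (P.card:ℝ)^2 := by
    rw [hEdef]
    field_simp
    ring
  rw [le_div_iff₀ (by positivity)]
  have key2 : (k:ℝ) * ((bad.card:ℝ) * (E/2)^2) * (4*N^2) ≤ N * P.card * S.card * (4*N^2) :=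
    mul_le_mul_of_nonneg_right key (by positivity)
  have hL : (k:ℝ) * ((bad.card:ℝ) * (E/2)^2) * (4*N^2)
      = ((bad.card:ℝ) * ((k:ℝ) * S.card * P.card)) * ((S.card:ℝ) * P.card) := by
    calc (k:ℝ) * ((bad.card:ℝ) * (E/2)^2) * (4*N^2)
        = (bad.card:ℝ) * (k:ℝ) * ((E/2)^2 * N^2 * 4) := by ring
      _ = (bad.card:ℝ) * (k:ℝ) * ((S.card:ℝ)^2 * (P.card:ℝ)^2) := by rw [e]
      _ = ((bad.card:ℝ) * ((k:ℝ) * S.card * P.card)) * ((S.card:ℝ) * P.card) := by ring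
  have hR : N * P.card * S.card * (4*N^2) = (4 * N^3) * ((S.card:ℝ) * P.card) := by ring
  rw [hL, hR] at key2
  exact le_of_mul_le_mul_right key2 (by positivity)

end Combin

end GowersAux


open GowersAux in
set_option maxHeartbeats 1000000 in

/-- Theorem 5.2 (Gowers, Quasirandom Groups): if every nontrivial complex
representation of a finite group `G` of order `n` has dimension at least `k`,
and `A₁, A₂, A₃, A₁₂, A₁₃, A₂₃, A₁₂₃ ⊆ G` have densities `p₁, …, p₁₂₃` with
`p₁p₂p₁₂`, `p₁p₃p₁₃`, `p₁p₂₃p₁₂₃`, `p₂p₃p₂₃p₁₂p₁₃p₁₂₃` all at least `16/k`, then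
there exist `x₁ ∈ A₁`, `x₂ ∈ A₂`, `x₃ ∈ A₃` with `x₁x₂ ∈ A₁₂`, `x₁x₃ ∈ A₁₃`,
`x₂x₃ ∈ A₂₃` and `x₁x₂x₃ ∈ A₁₂₃`. -/
theorem simultaneous_products_three_variables
    (G : Type) [Group G] [Fintype G] (k : ℕ) (hk0 : 0 < k)
    (hrep : ∀ (d : ℕ) (ρ : G →* Matrix.GeneralLinearGroup (Fin d) ℂ),
      (∃ g, ρ g ≠ 1) → k ≤ d)
    (A1 A2 A3 A12 A13 A23 A123 : Finset G)
    (p1 p2 p3 p12 p13 p23 p123 : ℝ)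
    (h1 : (A1.card : ℝ) = p1 * Fintype.card G)
    (h2 : (A2.card : ℝ) = p2 * Fintype.card G)
    (h3 : (A3.card : ℝ) = p3 * Fintype.card G)
    (h12 : (A12.card : ℝ) = p12 * Fintype.card G)
    (h13 : (A13.card : ℝ) = p13 * Fintype.card G)
    (h23 : (A23.card : ℝ) = p23 * Fintype.card G)
    (h123 : (A123.card : ℝ) = p123 * Fintype.card G)
    (hc1 : 16 / (k : ℝ) ≤ p1 * p2 * p12)
    (hc2 : 16 / (k : ℝ) ≤ p1 * p3 * p13)
    (hc3 : 16 / (k : ℝ) ≤ p1 * p23 * p123)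
    (hc4 : 16 / (k : ℝ) ≤ p2 * p3 * p23 * p12 * p13 * p123) :
    ∃ x1 ∈ A1, ∃ x2 ∈ A2, ∃ x3 ∈ A3,
      x1 * x2 ∈ A12 ∧ x1 * x3 ∈ A13 ∧ x2 * x3 ∈ A23 ∧ x1 * x2 * x3 ∈ A123 := by
  classical
  have hn0 : (0:ℝ) < (Fintype.card G : ℝ) := by exact_mod_cast Fintype.card_pos
  set n : ℝ := (Fintype.card G : ℝ) with hndef
  have hK0 : (0:ℝ) < (k:ℝ) := by exact_mod_cast hk0
  have h16 : (0:ℝ) < 16 / (k:ℝ) := by positivity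
  have haux : ∀ a b : ℝ, 0 ≤ a → 0 ≤ b → 0 < a * b → 0 < a ∧ 0 < b := by
    intro a b ha hb hab
    constructor
    · rcases ha.lt_or_eq with h | h
      · exact h
      · exfalso
        rw [← h, zero_mul] at hab
        exact lt_irrefl 0 hab
    · rcases hb.lt_or_eq with h | h
      · exact h
      · exfalso
        rw [← h, mul_zero] at hab
        exact lt_irrefl 0 hab
  -- nonnegativity of densities
  have hge : ∀ (A : Finset G) (p : ℝ), (A.card : ℝ) = p * n → 0 ≤ p := by
    intro A p hA
    have h0 : (0:ℝ) ≤ (A.card : ℝ) := by positivity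
    have hp : p = (A.card : ℝ) / n := by
      rw [hA]
      field_simp
    rw [hp]
    exact div_nonneg h0 hn0.le
  have hp1n := hge A1 p1 h1
  have hp2n := hge A2 p2 h2
  have hp3n := hge A3 p3 h3
  have hp12n := hge A12 p12 h12
  have hp13n := hge A13 p13 h13
  have hp23n := hge A23 p23 h23
  have hp123n := hge A123 p123 h123
  have hprod1 : 0 < p1 * p2 * p12 := lt_of_lt_of_le h16 hc1
  have hprod2 : 0 < p1 * p3 * p13 := lt_of_lt_of_le h16 hc2
  have hprod3 : 0 < p1 * p23 * p123 := lt_of_lt_of_le h16 hc3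
  obtain ⟨h12', hp12⟩ := haux (p1*p2) p12 (mul_nonneg hp1n hp2n) hp12n hprod1
  obtain ⟨hp1, hp2⟩ := haux p1 p2 hp1n hp2n h12'
  obtain ⟨h13', hp13⟩ := haux (p1*p3) p13 (mul_nonneg hp1n hp3n) hp13n hprod2
  obtain ⟨-, hp3⟩ := haux p1 p3 hp1n hp3n h13'
  obtain ⟨h123', hp123⟩ := haux (p1*p23) p123 (mul_nonneg hp1n hp23n) hp123n hprod3
  obtain ⟨-, hp23⟩ := haux p1 p23 hp1n hp23n h123'
  -- the three bad sets
  set bad2 := Finset.univ.filter (fun x : G =>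
    (cnt A2 A12 x : ℝ) ≤ (A2.card:ℝ) * A12.card / (2 * Fintype.card G)) with hbad2def
  set bad3 := Finset.univ.filter (fun x : G =>
    (cnt A3 A13 x : ℝ) ≤ (A3.card:ℝ) * A13.card / (2 * Fintype.card G)) with hbad3def
  set bad23 := Finset.univ.filter (fun x : G =>
    (cnt A23 A123 x : ℝ) ≤ (A23.card:ℝ) * A123.card / (2 * Fintype.card G)) with hbad23def
  have hb2 := bad_small k hk0 hrep A2 A12 (by rw [h2]; positivity) (by rw [h12]; positivity)
  have hb3 := bad_small k hk0 hrep A3 A13 (by rw [h3]; positivity) (by rw [h13]; positivity)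
  have hb23 := bad_small k hk0 hrep A23 A123 (by rw [h23]; positivity)
    (by rw [h123]; positivity)
  have hbound : ∀ (S P : Finset G) (p q : ℝ), 0 < p → 0 < q →
      (S.card : ℝ) = p * n → (P.card : ℝ) = q * n →
      16 / (k:ℝ) ≤ p1 * p * q →
      4 * (Fintype.card G:ℝ)^3 / ((k:ℝ) * S.card * P.card) ≤ p1 * n / 4 := by
    intro S P p q hp hq hS hP hcc
    rw [hS, hP]
    have h16k : 16 ≤ (p1 * p * q) * (k:ℝ) := (div_le_iff₀ hK0).mp hcc
    rw [div_le_div_iff₀ (by positivity) (by norm_num)]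
    have hmul := mul_le_mul_of_nonneg_right h16k (le_of_lt (pow_pos hn0 3))
    calc 4 * (Fintype.card G:ℝ)^3 * 4 = 16 * n^3 := by rw [hndef]; ring
      _ ≤ ((p1 * p * q) * (k:ℝ)) * n^3 := hmul
      _ = p1 * n * ((k:ℝ) * (p * n) * (q * n)) := by ring
  have hb2' : (bad2.card : ℝ) ≤ p1 * n / 4 :=
    le_trans hb2 (hbound A2 A12 p2 p12 hp2 hp12 h2 h12 hc1)
  have hb3' : (bad3.card : ℝ) ≤ p1 * n / 4 :=
    le_trans hb3 (hbound A3 A13 p3 p13 hp3 hp13 h3 h13 hc2)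
  have hb23' : (bad23.card : ℝ) ≤ p1 * n / 4 :=
    le_trans hb23 (hbound A23 A123 p23 p123 hp23 hp123 h23 h123 hc3)
  -- pick x₁
  have hsubne : (A1 \ (bad2 ∪ bad3 ∪ bad23)).Nonempty := by
    rw [Finset.sdiff_nonempty]
    intro hsub
    have hcardle : (A1.card:ℝ) ≤ ((bad2 ∪ bad3 ∪ bad23).card:ℝ) := by
      exact_mod_cast Finset.card_le_card hsub
    have hun : ((bad2 ∪ bad3 ∪ bad23).card:ℝ)
        ≤ (bad2.card:ℝ) + bad3.card + bad23.card := by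
      have u1 := Finset.card_union_le (bad2 ∪ bad3) bad23
      have u2 := Finset.card_union_le bad2 bad3
      push_cast
      exact_mod_cast le_trans u1 (by omega)
    have hpos : 0 < p1 * n := mul_pos hp1 hn0
    rw [h1] at hcardle
    linarith
  obtain ⟨x1, hx1⟩ := hsubne
  rw [Finset.mem_sdiff] at hx1
  obtain ⟨hx1A, hx1nb⟩ := hx1
  simp only [Finset.mem_union, not_or] at hx1nb
  obtain ⟨⟨hnb2, hnb3⟩, hnb23⟩ := hx1nb
  have hgt : ∀ (S P : Finset G) (bad : Finset G),
      bad = Finset.univ.filter (fun x : G =>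
        (cnt S P x : ℝ) ≤ (S.card:ℝ) * P.card / (2 * Fintype.card G)) →
      x1 ∉ bad → (S.card:ℝ) * P.card / (2 * Fintype.card G) < (cnt S P x1 : ℝ) := by
    intro S P bad hdef hnmem
    rw [hdef, Finset.mem_filter] at hnmem
    push_neg at hnmem
    exact hnmem (Finset.mem_univ x1)
  have hgt2 := hgt A2 A12 bad2 hbad2def hnb2
  have hgt3 := hgt A3 A13 bad3 hbad3def hnb3
  have hgt23 := hgt A23 A123 bad23 hbad23def hnb23
  -- the fibers
  set B := A2.filter (fun z => x1 * z ∈ A12) with hBdef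
  set C := A3.filter (fun z => x1 * z ∈ A13) with hCdef
  set D := A23.filter (fun z => x1 * z ∈ A123) with hDdef
  have hBc : (B.card : ℝ) = (cnt A2 A12 x1 : ℝ) := by
    rw [hBdef, cnt, Finset.filter_congr_decidable]
  have hCc : (C.card : ℝ) = (cnt A3 A13 x1 : ℝ) := by
    rw [hCdef, cnt, Finset.filter_congr_decidable]
  have hDc : (D.card : ℝ) = (cnt A23 A123 x1 : ℝ) := by
    rw [hDdef, cnt, Finset.filter_congr_decidable]
  have hE2 : (A2.card:ℝ) * A12.card / (2 * Fintype.card G) = p2 * p12 * n / 2 := by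
    rw [h2, h12, hndef]
    field_simp
  have hE3 : (A3.card:ℝ) * A13.card / (2 * Fintype.card G) = p3 * p13 * n / 2 := by
    rw [h3, h13, hndef]
    field_simp
  have hE23 : (A23.card:ℝ) * A123.card / (2 * Fintype.card G) = p23 * p123 * n / 2 := by
    rw [h23, h123, hndef]
    field_simp
  rw [hE2] at hgt2
  rw [hE3] at hgt3
  rw [hE23] at hgt23
  rw [← hBc] at hgt2
  rw [← hCc] at hgt3
  rw [← hDc] at hgt23
  have hL2 : (0:ℝ) < p2 * p12 * n / 2 := by positivity
  have hL3 : (0:ℝ) < p3 * p13 * n / 2 := by positivity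
  have hL23 : (0:ℝ) < p23 * p123 * n / 2 := by positivity
  have hBCD : (Fintype.card G : ℝ)^3 / k < (B.card : ℝ) * C.card * D.card := by
    have hmul1 : (p2 * p12 * n / 2) * (p3 * p13 * n / 2) < (B.card:ℝ) * C.card :=
      mul_lt_mul'' hgt2 hgt3 (le_of_lt hL2) (le_of_lt hL3)
    have hmul2 : ((p2 * p12 * n / 2) * (p3 * p13 * n / 2)) * (p23 * p123 * n / 2)
        < ((B.card:ℝ) * C.card) * D.card :=
      mul_lt_mul'' hmul1 hgt23 (le_of_lt (mul_pos hL2 hL3)) (le_of_lt hL23)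
    have hlow : 2 * n^3 / (k:ℝ)
        ≤ ((p2 * p12 * n / 2) * (p3 * p13 * n / 2)) * (p23 * p123 * n / 2) := by
      have := mul_le_mul_of_nonneg_right hc4 (le_of_lt (by positivity : (0:ℝ) < n^3/8))
      calc 2 * n^3 / (k:ℝ) = (16 / (k:ℝ)) * (n^3/8) := by ring
        _ ≤ (p2 * p3 * p23 * p12 * p13 * p123) * (n^3/8) := this
        _ = ((p2 * p12 * n / 2) * (p3 * p13 * n / 2)) * (p23 * p123 * n / 2) := by ring
    have hstep : (Fintype.card G : ℝ)^3 / k < 2 * n^3 / (k:ℝ) := by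
      rw [hndef, div_lt_div_iff₀ hK0 hK0]
      have hcube : (0:ℝ) < (Fintype.card G : ℝ)^3 * k := by positivity
      linarith
    calc (Fintype.card G : ℝ)^3 / k < 2 * n^3 / (k:ℝ) := hstep
      _ ≤ _ := hlow
      _ < (B.card:ℝ) * C.card * D.card := hmul2
  obtain ⟨x2, hx2, x3, hx3, hxD⟩ := exists_triple k hk0 hrep B C D hBCD
  rw [hBdef, Finset.mem_filter] at hx2
  rw [hCdef, Finset.mem_filter] at hx3
  rw [hDdef, Finset.mem_filter] at hxD
  refine ⟨x1, hx1A, x2, hx2.1, x3, hx3.1, hx2.2, hx3.2, hxD.1, ?_⟩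
  rw [mul_assoc]
  exact hxD.2
end
end

section
/- Let G be a finite group of order n such that every nontrivial complex representation of G has dimension at least k, let m ≥ 2, and for every pair 1 ≤ i < j ≤ m let A_{ij} be a subset of G of size p·n. Then, provided that p^{2m−3} ≥ 2^{3m}/k, there exist elements x₁, …, x_m of G such that x_i·x_j⁻¹ ∈ A_{ij} for every pair i < j. -/
open Matrix Finset
open scoped ComplexOrder

namespace Gowers

noncomputable section

variable {G : Type} [Group G] [Fintype G] [DecidableEq G]

/-- right-translation permutation matrix: `(RM h *ᵥ v) y = v (y*h)` -/
def RM (h : G) : Matrix G G ℂ := Matrix.of fun y z => if z = y * h then 1 else 0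

/-- left-translation permutation matrix -/
def LM (g : G) : Matrix G G ℂ := Matrix.of fun y z => if z = g * y then 1 else 0

/-- the counting matrix -/
def TM (C : Finset G) : Matrix G G ℂ := Matrix.of fun y z => if z * y ∈ C then 1 else 0

/-- projection onto functions of sum zero -/
def PM (G : Type) [Group G] [Fintype G] [DecidableEq G] : Matrix G G ℂ :=
  1 - (Fintype.card G : ℂ)⁻¹ • Matrix.of (fun _ _ => (1 : ℂ))

def SM (C : Finset G) : Matrix G G ℂ := PM G * ((TM C)ᴴ * TM C) * PM G

lemma RM_mulVec (h : G) (v : G → ℂ) (y : G) : (RM h *ᵥ v) y = v (y * h) := by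
  simp [RM, mulVec, dotProduct]

lemma RM_mul (h₁ h₂ : G) : RM (h₁ * h₂) = RM h₁ * RM (h₂ : G) := by
  ext y z
  simp only [RM, Matrix.mul_apply, Matrix.of_apply, ite_mul, one_mul, zero_mul]
  rw [Finset.sum_ite_eq' Finset.univ (y * h₁)]
  simp [mul_assoc, eq_comm]

omit [Fintype G] in
lemma RM_one : RM (1 : G) = 1 := by
  ext y z
  simp [RM, Matrix.one_apply, eq_comm]

omit [Fintype G] in
lemma conjTranspose_RM (h : G) : (RM h)ᴴ = RM h⁻¹ := by
  ext y z
  simp only [RM, conjTranspose_apply, Matrix.of_apply]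
  by_cases hc : y = z * h
  · simp [hc, mul_assoc]
  · have : ¬ (z = y * h⁻¹) := fun hz => hc (by simp [hz, mul_assoc])
    simp [hc, this]

omit [Fintype G] in
lemma conjTranspose_LM (g : G) : (LM g)ᴴ = LM g⁻¹ := by
  ext y z
  simp only [LM, conjTranspose_apply, Matrix.of_apply]
  by_cases hc : y = g * z
  · simp [hc, ← mul_assoc]
  · have : ¬ (z = g⁻¹ * y) := fun hz => hc (by simp [hz, ← mul_assoc])
    simp [hc, this]

lemma TM_mul_RM (C : Finset G) (h : G) : TM C * RM h = LM h⁻¹ * TM C := by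
  ext y z
  simp only [TM, RM, LM, Matrix.mul_apply, Matrix.of_apply, ite_mul, one_mul, zero_mul,
    mul_ite, mul_one, mul_zero]
  simp_rw [show ∀ x : G, (z = x * h) ↔ x = z * h⁻¹ from fun x => by
    constructor <;> intro hx <;> simp [hx, mul_assoc]]
  rw [Finset.sum_ite_eq' Finset.univ (z * h⁻¹)]
  have : ∀ x : G, (if z * x ∈ C then (if x = h⁻¹ * y then (1:ℂ) else 0) else 0)
      = if x = h⁻¹ * y then (if z * x ∈ C then (1:ℂ) else 0) else 0 := by
    intro x; split_ifs <;> simp_all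
  simp_rw [this]
  rw [Finset.sum_ite_eq' Finset.univ (h⁻¹ * y)]
  simp [mul_assoc]

lemma PM_hermitian : (PM G).IsHermitian := by
  unfold Matrix.IsHermitian PM
  ext y z
  simp [conjTranspose_apply, Matrix.one_apply, eq_comm]

lemma RM_mul_ones (h : G) : RM h * Matrix.of (fun _ _ : G => (1:ℂ)) = Matrix.of fun _ _ => 1 := by
  ext y z
  simp only [RM, Matrix.mul_apply, Matrix.of_apply, ite_mul, one_mul, zero_mul]
  rw [Finset.sum_ite_eq' Finset.univ (y * h)]
  simp

lemma ones_mul_RM (h : G) : Matrix.of (fun _ _ : G => (1:ℂ)) * RM h = Matrix.of fun _ _ => 1 := by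
  ext y z
  simp only [RM, Matrix.mul_apply, Matrix.of_apply, mul_ite, mul_one, mul_zero, one_mul]
  simp_rw [show ∀ x : G, (z = x * h) ↔ x = z * h⁻¹ from fun x => by
    constructor <;> intro hx <;> simp [hx, mul_assoc]]
  rw [Finset.sum_ite_eq' Finset.univ (z * h⁻¹)]
  simp

lemma PM_mul_RM (h : G) : PM G * RM h = RM h * PM G := by
  unfold PM
  rw [sub_mul, mul_sub, one_mul, mul_one, Matrix.smul_mul, Matrix.mul_smul,
    RM_mul_ones, ones_mul_RM]

lemma PM_idem : PM G * PM G = PM G := by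
  unfold PM
  have hJJ : (Matrix.of (fun _ _ : G => (1:ℂ))) * (Matrix.of (fun _ _ : G => (1:ℂ)))
      = (Fintype.card G : ℂ) • Matrix.of (fun _ _ : G => (1:ℂ)) := by
    ext y z
    simp [Matrix.mul_apply, Finset.card_univ]
  have hn : (Fintype.card G : ℂ) ≠ 0 := by
    exact_mod_cast Nat.cast_ne_zero.mpr Fintype.card_ne_zero
  have key : (Fintype.card G:ℂ)⁻¹ * ((Fintype.card G:ℂ)⁻¹ * (Fintype.card G:ℂ))
      = (Fintype.card G:ℂ)⁻¹ := by field_simp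
  simp only [sub_mul, mul_sub, one_mul, mul_one, Matrix.smul_mul, Matrix.mul_smul, hJJ,
    smul_smul, key]
  abel

lemma PM_mulVec (v : G → ℂ) :
    PM G *ᵥ v = fun y => v y - (Fintype.card G : ℂ)⁻¹ * ∑ x, v x := by
  funext y
  simp only [PM, mulVec, dotProduct, Matrix.sub_apply, Matrix.smul_apply, Matrix.one_apply,
    Matrix.of_apply, smul_eq_mul, mul_one, sub_mul, ite_mul, one_mul, zero_mul]
  rw [Finset.sum_sub_distrib, Finset.sum_ite_eq Finset.univ y v, ← Finset.mul_sum]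
  simp

lemma sum_PM_mulVec (v : G → ℂ) : ∑ x, (PM G *ᵥ v) x = 0 := by
  have hn : (Fintype.card G : ℂ) ≠ 0 := by
    exact_mod_cast Nat.cast_ne_zero.mpr Fintype.card_ne_zero
  rw [PM_mulVec]
  rw [Finset.sum_sub_distrib, ← Finset.mul_sum]
  simp only [Finset.sum_const, Finset.card_univ, nsmul_eq_mul]
  field_simp
  simp

lemma PM_mulVec_of_sum_zero (v : G → ℂ) (hv : ∑ x, v x = 0) : PM G *ᵥ v = v := by
  rw [PM_mulVec]
  funext y
  simp [hv]

lemma M_hermitian (C : Finset G) : ((TM C)ᴴ * TM C).IsHermitian :=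
  (Matrix.posSemidef_conjTranspose_mul_self (TM C)).1

lemma SM_hermitian (C : Finset G) : (SM C).IsHermitian := by
  have hP : (PM G)ᴴ = PM G := PM_hermitian
  have hM : ((TM C)ᴴ * TM C)ᴴ = (TM C)ᴴ * TM C := M_hermitian C
  unfold Matrix.IsHermitian SM
  rw [conjTranspose_mul, conjTranspose_mul, hP, hM]
  simp only [Matrix.mul_assoc]

lemma SM_posSemidef (C : Finset G) : (SM C).PosSemidef := by
  have hP : (PM G)ᴴ = PM G := PM_hermitian
  have h2 : SM C = (TM C * PM G)ᴴ * (TM C * PM G) := by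
    rw [conjTranspose_mul, hP, SM]
    simp only [Matrix.mul_assoc]
  rw [h2]
  exact Matrix.posSemidef_conjTranspose_mul_self _

lemma RM_mul_TMconj (C : Finset G) (h : G) : RM h * (TM C)ᴴ = (TM C)ᴴ * LM h⁻¹ := by
  simpa [conjTranspose_mul, conjTranspose_RM, conjTranspose_LM]
    using congrArg Matrix.conjTranspose (TM_mul_RM C h⁻¹)

lemma M_comm (C : Finset G) (h : G) :
    ((TM C)ᴴ * TM C) * RM h = RM h * ((TM C)ᴴ * TM C) := by
  calc ((TM C)ᴴ * TM C) * RM h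
      = (TM C)ᴴ * (TM C * RM h) := by simp only [Matrix.mul_assoc]
    _ = (TM C)ᴴ * (LM h⁻¹ * TM C) := by rw [TM_mul_RM]
    _ = ((TM C)ᴴ * LM h⁻¹) * TM C := by simp only [Matrix.mul_assoc]
    _ = (RM h * (TM C)ᴴ) * TM C := by rw [RM_mul_TMconj]
    _ = RM h * ((TM C)ᴴ * TM C) := by simp only [Matrix.mul_assoc]

lemma SM_comm (C : Finset G) (h : G) : SM C * RM h = RM h * SM C := by
  unfold SM
  calc PM G * ((TM C)ᴴ * TM C) * PM G * RM h
      = PM G * (((TM C)ᴴ * TM C) * (PM G * RM h)) := by simp only [Matrix.mul_assoc]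
    _ = PM G * (((TM C)ᴴ * TM C) * (RM h * PM G)) := by rw [PM_mul_RM]
    _ = PM G * ((((TM C)ᴴ * TM C) * RM h) * PM G) := by simp only [Matrix.mul_assoc]
    _ = PM G * ((RM h * ((TM C)ᴴ * TM C)) * PM G) := by rw [M_comm]
    _ = (PM G * RM h) * (((TM C)ᴴ * TM C) * PM G) := by simp only [Matrix.mul_assoc]
    _ = (RM h * PM G) * (((TM C)ᴴ * TM C) * PM G) := by rw [PM_mul_RM]
    _ = RM h * (PM G * ((TM C)ᴴ * TM C) * PM G) := by simp only [Matrix.mul_assoc]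

lemma sum_SM_mulVec (C : Finset G) (v : G → ℂ) : ∑ x, (SM C *ᵥ v) x = 0 := by
  have : SM C *ᵥ v = PM G *ᵥ ((((TM C)ᴴ * TM C) * PM G) *ᵥ v) := by
    rw [Matrix.mulVec_mulVec, SM, Matrix.mul_assoc]
  rw [this]
  exact sum_PM_mulVec _

lemma trace_M (C : Finset G) :
    ((TM C)ᴴ * TM C).trace = ((Fintype.card G : ℂ) * C.card) := by
  have h1 : ∀ z : G, (((TM C)ᴴ * TM C) z z) = (C.card : ℂ) := by
    intro z
    simp only [Matrix.mul_apply, conjTranspose_apply, TM, Matrix.of_apply]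
    have : ∀ y : G, star (if z * y ∈ C then (1:ℂ) else 0) * (if z * y ∈ C then (1:ℂ) else 0)
        = if z * y ∈ C then (1:ℂ) else 0 := by intro y; split <;> simp
    simp_rw [this]
    rw [Fintype.sum_equiv (Equiv.mulLeft z) _ (fun y => if y ∈ C then (1:ℂ) else 0)
      (fun y => by simp [Equiv.mulLeft])]
    simp [Finset.sum_ite_mem]
  rw [Matrix.trace]
  simp only [Matrix.diag]
  rw [Finset.sum_congr rfl (fun z _ => h1 z)]
  simp [Finset.card_univ, mul_comm]

lemma trace_eq_sum_eigen {n : Type} [Fintype n] [DecidableEq n] {A : Matrix n n ℂ}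
    (hA : A.IsHermitian) : A.trace = ((∑ i, hA.eigenvalues i : ℝ) : ℂ) := by
  conv_lhs => rw [hA.spectral_theorem, Unitary.conjStarAlgAut_apply]
  rw [Matrix.trace_mul_cycle]
  rw [show (star (hA.eigenvectorUnitary : Matrix n n ℂ)) * (hA.eigenvectorUnitary : Matrix n n ℂ)
    = 1 from (Matrix.mem_unitaryGroup_iff').mp hA.eigenvectorUnitary.2]
  rw [one_mul, Matrix.trace_diagonal]
  push_cast
  rfl
lemma eigen_le (k : ℕ)
    (hrep : ∀ (d : ℕ) (ρ : G →* Matrix.GeneralLinearGroup (Fin d) ℂ),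
      (∃ g, ρ g ≠ 1) → k ≤ d)
    (S : Matrix G G ℂ) (hpsd : S.PosSemidef)
    (hcomm : ∀ h : G, S * RM h = RM h * S)
    (hsum : ∀ v : G → ℂ, ∑ x, (S *ᵥ v) x = 0)
    (i0 : G) (hpos : 0 < hpsd.1.eigenvalues i0) :
    (k : ℝ) * hpsd.1.eigenvalues i0 ≤ ∑ j, hpsd.1.eigenvalues j := by
  have hS : S.IsHermitian := hpsd.1
  set μ : ℝ := hS.eigenvalues i0 with hμdef
  have hμ0 : (μ : ℂ) ≠ 0 := by exact_mod_cast ne_of_gt hpos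
  -- the eigenspace
  set E : Submodule ℂ (G → ℂ) :=
    LinearMap.ker (S.mulVecLin - (μ : ℂ) • LinearMap.id) with hEdef
  have mem_E : ∀ v : G → ℂ, v ∈ E ↔ S *ᵥ v = (μ : ℂ) • v := by
    intro v
    simp [hEdef, LinearMap.mem_ker, sub_eq_zero, Matrix.mulVecLin_apply]
  -- the eigenvector
  set v0 : G → ℂ := ⇑(hS.eigenvectorBasis i0) with hv0def
  have hv0E : v0 ∈ E := by
    rw [mem_E]
    have := hS.mulVec_eigenvectorBasis i0
    rw [this]
    funext x
    simp [hv0def, Complex.real_smul]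
    exact Or.inl hμdef.symm
  have hv0ne : v0 ≠ 0 := by
    intro h
    exact hS.eigenvectorBasis.orthonormal.ne_zero i0 (by ext x; exact congrFun h x)
  -- invariance of the eigenspace
  have hinv : ∀ h : G, ∀ v ∈ E, RM h *ᵥ v ∈ E := by
    intro h v hv
    rw [mem_E] at hv ⊢
    rw [Matrix.mulVec_mulVec, hcomm h, ← Matrix.mulVec_mulVec, hv, Matrix.mulVec_smul]
  -- the representation on the eigenspace
  haveI : FiniteDimensional ℂ E := inferInstance
  set d : ℕ := Module.finrank ℂ E with hddef
  set b : Module.Basis (Fin d) ℂ E := Module.finBasis ℂ E with hbdef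
  set ρ₀ : G →* Module.End ℂ E :=
    { toFun := fun h => ((RM h).mulVecLin).restrict (fun v hv => hinv h v hv)
      map_one' := by
        ext v
        simp [LinearMap.restrict_apply, RM_one]
      map_mul' := by
        intro g h
        ext v
        simp only [LinearMap.restrict_apply, Module.End.mul_apply, Matrix.mulVecLin_apply,
          RM_mul, LinearMap.coe_mk]
        rw [← Matrix.mulVec_mulVec]; rfl } with hρ₀def
  have hρ₀_apply : ∀ (h : G) (v : E), ((ρ₀ h v : G → ℂ)) = RM h *ᵥ (v : G → ℂ) := by
    intro h v
    simp [hρ₀def, LinearMap.restrict_apply]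
    rfl
  set ρ : G →* Matrix.GeneralLinearGroup (Fin d) ℂ :=
    (Units.map ((LinearMap.toMatrixAlgEquiv b).toRingEquiv.toRingHom.toMonoidHom)).comp
      ρ₀.toHomUnits with hρdef
  -- nontriviality
  have hnontriv : ∃ g, ρ g ≠ 1 := by
    by_contra hall
    push_neg at hall
    have hfix : ∀ (g : G) (v : G → ℂ), v ∈ E → RM g *ᵥ v = v := by
      intro g v hv
      have h1 : ρ₀ g = 1 := by
        have h2 := hall g
        have h3 : ((ρ g : (Matrix (Fin d) (Fin d) ℂ)ˣ) : Matrix (Fin d) (Fin d) ℂ) = 1 := by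
          rw [h2]; rfl
        have h4 : (LinearMap.toMatrixAlgEquiv b) (ρ₀ g) = 1 := h3
        exact (LinearMap.toMatrixAlgEquiv b).injective
          (by rw [h4, _root_.map_one])
      have := congrArg (fun (f : Module.End ℂ E) => ((f ⟨v, hv⟩ : E) : G → ℂ)) h1
      simpa [hρ₀_apply] using this
    -- v0 is then constant
    have hconst : ∀ g : G, v0 g = v0 1 := by
      intro g
      have := congrFun (hfix g v0 hv0E) 1
      rw [RM_mulVec] at this
      simpa using this
    -- but v0 has sum zero
    have hsum0 : ∑ x, v0 x = 0 := by
      have h1 : S *ᵥ v0 = (μ:ℂ) • v0 := (mem_E v0).mp hv0E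
      have h2 := hsum v0
      rw [h1] at h2
      simp only [Pi.smul_apply, smul_eq_mul, ← Finset.mul_sum] at h2
      exact (mul_eq_zero.mp h2).resolve_left hμ0
    have hcard : (Fintype.card G : ℂ) ≠ 0 := by
      exact_mod_cast Nat.cast_ne_zero.mpr Fintype.card_ne_zero
    apply hv0ne
    funext x
    have h5 : ∑ x, v0 x = (Fintype.card G : ℂ) * v0 1 := by
      rw [Finset.sum_congr rfl (fun x _ => hconst x)]
      simp [Finset.card_univ, mul_comm]
    rw [hsum0] at h5
    have h6 : v0 1 = 0 := by
      rcases mul_eq_zero.mp h5.symm with h | h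
      · exact absurd h hcard
      · exact h
    rw [hconst x, h6]
    rfl
  have hkd : k ≤ d := hrep d ρ hnontriv
  -- multiplicity of μ bounds d
  set U : Matrix G G ℂ := (hS.eigenvectorUnitary : Matrix G G ℂ) with hUdef
  have hUU : star U * U = 1 := (Matrix.mem_unitaryGroup_iff').mp hS.eigenvectorUnitary.2
  have hUU' : U * star U = 1 := (Matrix.mem_unitaryGroup_iff).mp hS.eigenvectorUnitary.2
  have key : ∀ v ∈ E, ∀ j : G, hS.eigenvalues j ≠ μ → (star U *ᵥ v) j = 0 := by
    intro v hv j hj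
    have h1 : S *ᵥ v = (μ:ℂ) • v := (mem_E v).mp hv
    have h2 : Matrix.diagonal (RCLike.ofReal ∘ hS.eigenvalues) *ᵥ (star U *ᵥ v)
        = (μ:ℂ) • (star U *ᵥ v) := by
      have h3 : star U * S = Matrix.diagonal (RCLike.ofReal ∘ hS.eigenvalues) * star U := by
        conv_lhs => rw [hS.spectral_theorem, Unitary.conjStarAlgAut_apply]
        rw [← Matrix.mul_assoc, ← Matrix.mul_assoc, hUU, one_mul]
      calc Matrix.diagonal (RCLike.ofReal ∘ hS.eigenvalues) *ᵥ (star U *ᵥ v)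
          = (Matrix.diagonal (RCLike.ofReal ∘ hS.eigenvalues) * star U) *ᵥ v := by
            rw [Matrix.mulVec_mulVec]
        _ = (star U * S) *ᵥ v := by rw [h3]
        _ = star U *ᵥ (S *ᵥ v) := by rw [Matrix.mulVec_mulVec]
        _ = (μ:ℂ) • (star U *ᵥ v) := by rw [h1, Matrix.mulVec_smul]
    have h4 := congrFun h2 j
    rw [Matrix.mulVec_diagonal] at h4
    simp only [Function.comp_apply, Pi.smul_apply, smul_eq_mul,
      RCLike.ofReal_alg, smul_eq_mul, mul_one, Complex.coe_algebraMap] at h4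
    have h5 : ((hS.eigenvalues j : ℂ) - (μ:ℂ)) * (star U *ᵥ v) j = 0 := by
      rw [sub_mul, h4]; ring
    rcases mul_eq_zero.mp h5 with h | h
    · exfalso
      apply hj
      have : (hS.eigenvalues j : ℂ) = (μ : ℂ) := by linear_combination h
      exact_mod_cast this
    · exact h
  set mult : Finset G := Finset.univ.filter (fun j => hS.eigenvalues j = μ) with hmultdef
  have hdmult : d ≤ mult.card := by
    set ψ : E →ₗ[ℂ] ({j : G // hS.eigenvalues j = μ} → ℂ) :=
      (LinearMap.funLeft ℂ ℂ (Subtype.val)).comp ((star U).mulVecLin.comp E.subtype) with hψdef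
    have hψinj : Function.Injective ψ := by
      rw [← LinearMap.ker_eq_bot]
      rw [Submodule.eq_bot_iff]
      rintro ⟨v, hv⟩ hker
      rw [LinearMap.mem_ker] at hker
      have hψv : ∀ (j : G) (hj : hS.eigenvalues j = μ), (star U *ᵥ v) j = 0 := by
        intro j hj
        have := congrFun hker (⟨j, hj⟩ : {j : G // hS.eigenvalues j = μ})
        simpa [hψdef, LinearMap.funLeft_apply, Matrix.mulVecLin_apply] using this
      have hw : star U *ᵥ v = 0 := by
        funext j
        by_cases hj : hS.eigenvalues j = μ
        · exact hψv j hj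
        · exact key v hv j hj
      have : v = 0 := by
        have h7 : (U * star U) *ᵥ v = U *ᵥ (star U *ᵥ v) := (Matrix.mulVec_mulVec _ _ _).symm
        rw [hUU', Matrix.one_mulVec, hw] at h7
        rw [h7, Matrix.mulVec_zero]
      exact Subtype.ext this
    calc d ≤ Module.finrank ℂ ({j : G // hS.eigenvalues j = μ} → ℂ) :=
          LinearMap.finrank_le_finrank_of_injective hψinj
      _ = Fintype.card {j : G // hS.eigenvalues j = μ} := Module.finrank_fintype_fun_eq_card ℂ
      _ = mult.card := Fintype.card_subtype _
  -- conclude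
  have hnonneg : ∀ j, 0 ≤ hS.eigenvalues j := hpsd.eigenvalues_nonneg
  calc (k : ℝ) * μ ≤ (mult.card : ℝ) * μ := by
        apply mul_le_mul_of_nonneg_right _ (le_of_lt hpos)
        exact_mod_cast le_trans hkd hdmult
    _ = ∑ j ∈ mult, hS.eigenvalues j := by
        rw [Finset.sum_congr rfl (fun j hj => (Finset.mem_filter.mp hj).2)]
        simp [mul_comm]
        exact Or.inl rfl
    _ ≤ ∑ j, hS.eigenvalues j := by
        apply Finset.sum_le_sum_of_subset_of_nonneg (Finset.subset_univ _)
        intro j _ _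
        exact hnonneg j
lemma dot_self_re (v : G → ℂ) :
    (star v ⬝ᵥ v).re = ∑ x, Complex.normSq (v x) := by
  rw [dotProduct, Complex.re_sum]
  apply Finset.sum_congr rfl
  intro x _
  simp only [Pi.star_apply]
  rw [show star (v x) = (starRingEnd ℂ) (v x) from rfl, ← Complex.normSq_eq_conj_mul_self]
  simp

lemma form_le {S : Matrix G G ℂ} (hS : S.IsHermitian) {c : ℝ} (hc : 0 ≤ c)
    (hbound : ∀ j, hS.eigenvalues j ≤ c) (f : G → ℂ) :
    (star f ⬝ᵥ (S *ᵥ f)).re ≤ c * (star f ⬝ᵥ f).re := by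
  set U : Matrix G G ℂ := (hS.eigenvectorUnitary : Matrix G G ℂ) with hUdef
  have hUU : star U * U = 1 := (Matrix.mem_unitaryGroup_iff').mp hS.eigenvectorUnitary.2
  have hUU' : U * star U = 1 := (Matrix.mem_unitaryGroup_iff).mp hS.eigenvectorUnitary.2
  set g : G → ℂ := star U *ᵥ f with hgdef
  have hstarg : star g = star f ᵥ* U := by
    rw [hgdef, Matrix.star_mulVec, Matrix.star_eq_conjTranspose,
      Matrix.conjTranspose_conjTranspose]
  have hdot : ∀ w : G → ℂ, star f ⬝ᵥ (U *ᵥ w) = star g ⬝ᵥ w := by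
    intro w
    rw [Matrix.dotProduct_mulVec, hstarg]
  have hform : star f ⬝ᵥ (S *ᵥ f)
      = ∑ j, (starRingEnd ℂ) (g j) * ((hS.eigenvalues j : ℂ) * g j) := by
    have h1 : S *ᵥ f = U *ᵥ (Matrix.diagonal (RCLike.ofReal ∘ hS.eigenvalues) *ᵥ g) := by
      conv_lhs => rw [hS.spectral_theorem, Unitary.conjStarAlgAut_apply]
      rw [Matrix.mulVec_mulVec, Matrix.mulVec_mulVec]
    rw [h1, hdot, dotProduct]
    apply Finset.sum_congr rfl
    intro j _
    rw [Matrix.mulVec_diagonal]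
    simp [RCLike.ofReal_alg]
  have hg2 : star f ⬝ᵥ f = star g ⬝ᵥ g := by
    rw [hstarg, ← Matrix.dotProduct_mulVec, Matrix.mulVec_mulVec, hUU', Matrix.one_mulVec]
  rw [hform, hg2, Complex.re_sum, dot_self_re]
  rw [Finset.mul_sum]
  apply Finset.sum_le_sum
  intro j _
  have : ((starRingEnd ℂ) (g j) * ((hS.eigenvalues j : ℂ) * g j))
      = ((hS.eigenvalues j * Complex.normSq (g j) : ℝ) : ℂ) := by
    rw [show (starRingEnd ℂ) (g j) * ((hS.eigenvalues j : ℂ) * g j)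
      = (hS.eigenvalues j : ℂ) * ((starRingEnd ℂ) (g j) * g j) by ring,
      ← Complex.normSq_eq_conj_mul_self]
    push_cast
    ring
  rw [this, Complex.ofReal_re]
  apply mul_le_mul_of_nonneg_right (hbound j) (Complex.normSq_nonneg _)
lemma trace_SM_re_le (C : Finset G) :
    ((SM C).trace).re ≤ (Fintype.card G : ℝ) * C.card := by
  set M : Matrix G G ℂ := (TM C)ᴴ * TM C with hMdef
  set J : Matrix G G ℂ := Matrix.of (fun _ _ => (1:ℂ)) with hJdef
  have hMpsd : M.PosSemidef := Matrix.posSemidef_conjTranspose_mul_self (TM C)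
  have h1 : (SM C).trace = (M * PM G).trace := by
    rw [SM, Matrix.mul_assoc, Matrix.trace_mul_comm (PM G) (M * PM G), Matrix.mul_assoc,
      PM_idem]
  have h2 : M * PM G = M - (Fintype.card G : ℂ)⁻¹ • (M * J) := by
    rw [PM, Matrix.mul_sub, Matrix.mul_one, Matrix.mul_smul]
  have h3 : (M * J).trace = star (fun _ : G => (1:ℂ)) ⬝ᵥ (M *ᵥ (fun _ => 1)) := by
    simp [Matrix.trace, Matrix.diag, Matrix.mul_apply, Matrix.mulVec, dotProduct, hJdef]
  have h4 : (0 : ℂ) ≤ (M * J).trace := by rw [h3]; exact hMpsd.dotProduct_mulVec_nonneg _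
  have h5 : 0 ≤ ((M * J).trace).re := (Complex.le_def.mp h4).1
  have h6 : (M.trace) = ((Fintype.card G : ℝ) * C.card : ℝ) := by
    rw [trace_M]; push_cast; ring
  rw [h1, h2, Matrix.trace_sub, Matrix.trace_smul]
  rw [Complex.sub_re, h6, Complex.ofReal_re]
  have h7 : 0 ≤ ((Fintype.card G : ℂ)⁻¹ • (M * J).trace).re := by
    have : ((Fintype.card G : ℂ))⁻¹ = (((Fintype.card G : ℝ))⁻¹ : ℝ) := by push_cast; rfl
    rw [smul_eq_mul, this]
    rw [Complex.re_ofReal_mul]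
    positivity
  linarith

lemma TfBound (k : ℕ) (hk0 : 0 < k)
    (hrep : ∀ (d : ℕ) (ρ : G →* Matrix.GeneralLinearGroup (Fin d) ℂ),
      (∃ g, ρ g ≠ 1) → k ≤ d)
    (C : Finset G) (f : G → ℂ) (hf : ∑ x, f x = 0) :
    (star (TM C *ᵥ f) ⬝ᵥ (TM C *ᵥ f)).re
      ≤ ((Fintype.card G : ℝ) * C.card / k) * (star f ⬝ᵥ f).re := by
  have hpsd := SM_posSemidef C
  set c : ℝ := (Fintype.card G : ℝ) * C.card / k with hcdef
  have hc : 0 ≤ c := by positivity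
  have hsum_eig : ∑ j, hpsd.1.eigenvalues j = ((SM C).trace).re := by
    rw [trace_eq_sum_eigen hpsd.1, Complex.ofReal_re]
  have hbound : ∀ j, hpsd.1.eigenvalues j ≤ c := by
    intro j
    rcases le_or_gt (hpsd.1.eigenvalues j) 0 with h | h
    · linarith
    · have h8 := eigen_le k hrep (SM C) hpsd (SM_comm C) (sum_SM_mulVec C) j h
      rw [hsum_eig] at h8
      have h9 := le_trans h8 (trace_SM_re_le C)
      rw [hcdef, le_div_iff₀ (by exact_mod_cast hk0)]
      linarith [h9]
  have hform := form_le hpsd.1 hc hbound f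
  have hPf : PM G *ᵥ f = f := PM_mulVec_of_sum_zero f hf
  have hstarfP : star f ᵥ* PM G = star f := by
    have := Matrix.star_mulVec (PM G) f
    rw [hPf, PM_hermitian] at this
    exact this.symm
  have hEq : star f ⬝ᵥ (SM C *ᵥ f) = star (TM C *ᵥ f) ⬝ᵥ (TM C *ᵥ f) := by
    calc star f ⬝ᵥ (SM C *ᵥ f)
        = star f ⬝ᵥ (PM G *ᵥ ((((TM C)ᴴ * TM C) * PM G) *ᵥ f)) := by
          rw [Matrix.mulVec_mulVec, SM, Matrix.mul_assoc]
      _ = (star f ᵥ* PM G) ⬝ᵥ ((((TM C)ᴴ * TM C) * PM G) *ᵥ f) := by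
          rw [Matrix.dotProduct_mulVec]
      _ = star f ⬝ᵥ ((((TM C)ᴴ * TM C) * PM G) *ᵥ f) := by rw [hstarfP]
      _ = star f ⬝ᵥ (((TM C)ᴴ * TM C) *ᵥ (PM G *ᵥ f)) := by rw [Matrix.mulVec_mulVec]
      _ = star f ⬝ᵥ (((TM C)ᴴ * TM C) *ᵥ f) := by rw [hPf]
      _ = star f ⬝ᵥ ((TM C)ᴴ *ᵥ (TM C *ᵥ f)) := by rw [Matrix.mulVec_mulVec]
      _ = (star f ᵥ* (TM C)ᴴ) ⬝ᵥ (TM C *ᵥ f) := by rw [Matrix.dotProduct_mulVec]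
      _ = star (TM C *ᵥ f) ⬝ᵥ (TM C *ᵥ f) := by rw [← Matrix.star_mulVec]
  rw [← hEq]
  exact hform
/-- number of `x ∈ C` with `x y⁻¹ ∈ D`, i.e. `|C ∩ D·y|` -/
def cnt (C D : Finset G) (y : G) : ℕ := (C.filter fun x => x * y⁻¹ ∈ D).card

lemma mixing (k : ℕ) (hk0 : 0 < k)
    (hrep : ∀ (d : ℕ) (ρ : G →* Matrix.GeneralLinearGroup (Fin d) ℂ),
      (∃ g, ρ g ≠ 1) → k ≤ d)
    (C D : Finset G) :
    ∑ y : G, ((cnt C D y : ℝ) - (D.card : ℝ)/(Fintype.card G) * C.card)^2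
      ≤ (Fintype.card G : ℝ) * C.card * D.card / k := by
  set n : ℝ := (Fintype.card G : ℝ) with hndef
  have hn0 : (0:ℝ) < n := by
    rw [hndef]; exact_mod_cast Fintype.card_pos
  set p : ℝ := (D.card : ℝ)/n with hpdef
  have hp0 : 0 ≤ p := by positivity
  set f : G → ℂ := fun z => (if z ∈ D then (1:ℂ) else 0) - ((p : ℝ) : ℂ) with hfdef
  have hf : ∑ x, f x = 0 := by
    rw [hfdef]
    rw [Finset.sum_sub_distrib]
    simp only [Finset.sum_const, Finset.card_univ, nsmul_eq_mul]
    rw [Finset.sum_ite_mem, Finset.univ_inter, Finset.sum_const, nsmul_eq_mul, mul_one]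
    rw [hpdef]
    push_cast [hndef]
    field_simp
    simp
  have hTf : ∀ y, (TM C *ᵥ f) y = (((cnt C D y : ℝ) - p * C.card : ℝ) : ℂ) := by
    intro y
    have hcard1 : ∑ z : G, (if z * y ∈ C then (1:ℂ) else 0) * (if z ∈ D then 1 else 0)
        = (cnt C D y : ℂ) := by
      have hstep : ∀ z : G, (if z * y ∈ C then (1:ℂ) else 0) * (if z ∈ D then 1 else 0)
          = if (z * y ∈ C ∧ z ∈ D) then 1 else 0 := by
        intro z; split_ifs with h1 h2 h3 <;> simp_all
      simp_rw [hstep]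
      rw [Finset.sum_boole]
      norm_cast
      apply Finset.card_bij (fun z _ => z * y)
      · intro z hz
        simp only [Finset.mem_filter, Finset.mem_univ, true_and] at hz
        simp [Finset.mem_filter, hz.1, mul_assoc, hz.2]
      · intro a ha b hb hab
        exact mul_right_cancel hab
      · intro x hx
        simp only [Finset.mem_filter, cnt] at hx
        exact ⟨x * y⁻¹, by simp [Finset.mem_filter, mul_assoc, hx.1, hx.2], by simp [mul_assoc]⟩
    have hcard2 : ∑ z : G, (if z * y ∈ C then (1:ℂ) else 0) = (C.card : ℂ) := by
      rw [Fintype.sum_equiv (Equiv.mulRight y) _ (fun z => if z ∈ C then (1:ℂ) else 0)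
        (fun z => by simp [Equiv.mulRight])]
      rw [Finset.sum_ite_mem, Finset.univ_inter, Finset.sum_const, nsmul_eq_mul, mul_one]
    have : (TM C *ᵥ f) y
        = ∑ z : G, (if z * y ∈ C then (1:ℂ) else 0) * ((if z ∈ D then (1:ℂ) else 0) - (p:ℂ)) := by
      simp [TM, Matrix.mulVec, dotProduct, hfdef]
    rw [this]
    simp_rw [mul_sub]
    rw [Finset.sum_sub_distrib, hcard1, ← Finset.sum_mul, hcard2]
    push_cast
    ring
  have key := TfBound k hk0 hrep C f hf
  have hLHS : (star (TM C *ᵥ f) ⬝ᵥ (TM C *ᵥ f)).re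
      = ∑ y : G, ((cnt C D y : ℝ) - p * C.card)^2 := by
    rw [dot_self_re]
    apply Finset.sum_congr rfl
    intro y _
    rw [hTf y, Complex.normSq_ofReal]
    ring
  have hff : (star f ⬝ᵥ f).re ≤ (D.card : ℝ) := by
    rw [dot_self_re]
    have hfz : ∀ z, Complex.normSq (f z) = ((if z ∈ D then (1:ℝ) else 0) - p)^2 := by
      intro z
      simp only [hfdef]
      have : (if z ∈ D then (1:ℂ) else 0) - (p:ℂ)
          = (((if z ∈ D then (1:ℝ) else 0) - p : ℝ) : ℂ) := by
        push_cast
        split_ifs <;> simp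
      rw [this, Complex.normSq_ofReal]
      ring
    simp_rw [hfz]
    have hexp : ∀ z : G, ((if z ∈ D then (1:ℝ) else 0) - p)^2
        = (if z ∈ D then (1:ℝ) else 0) - 2*p*(if z ∈ D then (1:ℝ) else 0) + p^2 := by
      intro z; split_ifs <;> ring
    simp_rw [hexp]
    rw [Finset.sum_add_distrib, Finset.sum_sub_distrib]
    simp_rw [← Finset.mul_sum]
    rw [Finset.sum_ite_mem, Finset.univ_inter, Finset.sum_const, nsmul_eq_mul, mul_one,
      Finset.sum_const, Finset.card_univ, nsmul_eq_mul]
    have hnp : (Fintype.card G : ℝ) * p^2 = p * D.card := by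
      rw [hpdef]
      field_simp [hndef]
      ring
    rw [hnp]
    nlinarith [mul_nonneg hp0 (Nat.cast_nonneg (α := ℝ) D.card)]
  rw [hLHS] at key
  calc ∑ y : G, ((cnt C D y : ℝ) - p * C.card)^2
      ≤ (n * C.card / k) * (star f ⬝ᵥ f).re := key
    _ ≤ (n * C.card / k) * D.card := by
        apply mul_le_mul_of_nonneg_left hff
        positivity
    _ = n * C.card * D.card / k := by ring
lemma badcount (k : ℕ) (hk0 : 0 < k)
    (hrep : ∀ (d : ℕ) (ρ : G →* Matrix.GeneralLinearGroup (Fin d) ℂ),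
      (∃ g, ρ g ≠ 1) → k ≤ d)
    (C D : Finset G) :
    ((Finset.univ.filter fun y : G =>
        (cnt C D y : ℝ) ≤ (D.card : ℝ)/(Fintype.card G) * C.card / 2).card : ℝ)
      * ((D.card : ℝ)/(Fintype.card G) * C.card / 2)^2
      ≤ (Fintype.card G : ℝ) * C.card * D.card / k := by
  set β : ℝ := (D.card : ℝ)/(Fintype.card G) * C.card with hβdef
  have hβ0 : 0 ≤ β := by positivity
  set Bad := Finset.univ.filter fun y : G => (cnt C D y : ℝ) ≤ β / 2 with hBdef
  have h1 : ∀ y ∈ Bad, (β/2)^2 ≤ ((cnt C D y : ℝ) - β)^2 := by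
    intro y hy
    rw [hBdef, Finset.mem_filter] at hy
    have h2 : (cnt C D y : ℝ) ≤ β/2 := hy.2
    have h3 : (0:ℝ) ≤ (cnt C D y : ℝ) := Nat.cast_nonneg _
    nlinarith
  calc (Bad.card : ℝ) * (β/2)^2 = ∑ _y ∈ Bad, (β/2)^2 := by
        rw [Finset.sum_const, nsmul_eq_mul]
    _ ≤ ∑ y ∈ Bad, ((cnt C D y : ℝ) - β)^2 := Finset.sum_le_sum h1
    _ ≤ ∑ y : G, ((cnt C D y : ℝ) - β)^2 := by
        apply Finset.sum_le_sum_of_subset_of_nonneg (Finset.subset_univ _)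
        intro y _ _
        positivity
    _ ≤ (Fintype.card G : ℝ) * C.card * D.card / k := mixing k hk0 hrep C D
lemma IND (k : ℕ) (hk0 : 0 < k)
    (hrep : ∀ (d : ℕ) (ρ : G →* Matrix.GeneralLinearGroup (Fin d) ℂ),
      (∃ g, ρ g ≠ 1) → k ≤ d)
    (p : ℝ) (hp0 : 0 < p) (hp1 : p ≤ 1) :
    ∀ t : ℕ, 1 ≤ t → ∀ c : ℝ, 0 < c →
    ∀ C : Fin t → Finset G, ∀ A : Fin t → Fin t → Finset G,
    (∀ i, c * (Fintype.card G : ℝ) ≤ ((C i).card : ℝ)) →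
    (∀ i j : Fin t, i < j → ((A i j).card : ℝ) = p * (Fintype.card G : ℝ)) →
    (∀ s : ℕ, 2 ≤ s → s ≤ t →
      4*((s:ℝ)-1) * 4^(t-s) < (k:ℝ) * p^(2*(t-s)+1) * c^2) →
    ∃ y : Fin t → G, (∀ i, y i ∈ C i) ∧ ∀ i j : Fin t, i < j → y i * (y j)⁻¹ ∈ A i j := by
  have hn0 : (0:ℝ) < (Fintype.card G : ℝ) := by exact_mod_cast Fintype.card_pos
  intro t ht
  induction t, ht using Nat.le_induction with
  | base =>
    intro c hc C A hC hA _
    have hpos : 0 < (C 0).card := by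
      have := lt_of_lt_of_le (by positivity : (0:ℝ) < c * (Fintype.card G : ℝ)) (hC 0)
      exact_mod_cast this
    obtain ⟨y0, hy0⟩ := Finset.card_pos.mp hpos
    refine ⟨fun _ => y0, fun i => by
      have : i = 0 := Subsingleton.elim i 0
      rw [this]; exact hy0, ?_⟩
    intro i j hij
    exfalso
    have h1 : (i : ℕ) < (j : ℕ) := hij
    have h2 : (j : ℕ) < 1 := j.isLt
    omega
  | succ t ht IH =>
    intro c hc C A hC hA hkey
    set n : ℝ := (Fintype.card G : ℝ) with hndef
    set last : Fin (t+1) := Fin.last t with hlastdef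
    have hkpc : (0:ℝ) < (k:ℝ) * p * c := by
      have : (0:ℝ) < (k:ℝ) := by exact_mod_cast hk0
      positivity
    -- the bad sets
    set Ci : Fin t → Finset G := fun i => C i.castSucc with hCidef
    set Di : Fin t → Finset G := fun i => A i.castSucc last with hDidef
    have hDicard : ∀ i, ((Di i).card : ℝ) = p * n := fun i =>
      hA i.castSucc last (Fin.castSucc_lt_last i)
    have hCi_ge : ∀ i, c * n ≤ ((Ci i).card : ℝ) := fun i => hC i.castSucc
    have hCi_pos : ∀ i, (0:ℝ) < ((Ci i).card : ℝ) := fun i =>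
      lt_of_lt_of_le (by positivity) (hCi_ge i)
    set bad : Fin t → Finset G := fun i => Finset.univ.filter fun y : G =>
      (cnt (Ci i) (Di i) y : ℝ) ≤ ((Di i).card : ℝ)/n * (Ci i).card / 2 with hbaddef
    have hβeq : ∀ i, ((Di i).card : ℝ)/n * ((Ci i).card : ℝ) / 2
        = p * ((Ci i).card : ℝ) / 2 := by
      intro i
      rw [hDicard i]
      field_simp
    have hbadi : ∀ i, ((bad i).card : ℝ) * ((k:ℝ)*p*c) ≤ 4*n := by
      intro i
      have h := badcount k hk0 hrep (Ci i) (Di i)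
      set B : ℝ := ((bad i).card : ℝ) with hBdef'
      have hB0 : 0 ≤ B := Nat.cast_nonneg _
      rw [hβeq i, hDicard i] at h
      -- h : B * (p * Ci.card / 2)^2 ≤ n * Ci.card * (p*n) / k
      have hk' : (0:ℝ) < (k:ℝ) := by exact_mod_cast hk0
      have h2 : B * (p * ((Ci i).card : ℝ) / 2)^2 * k ≤ n * ((Ci i).card : ℝ) * (p*n) :=
        (le_div_iff₀ hk').mp h
      have hpCi : (0:ℝ) < p * ((Ci i).card : ℝ) := mul_pos hp0 (hCi_pos i)
      have e2 : B * (k:ℝ) * p * ((Ci i).card : ℝ) ≤ 4 * n * n := by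
        have e1' : (B*(k:ℝ)*p*((Ci i).card : ℝ))*(p*((Ci i).card : ℝ))
            ≤ (4*n*n)*(p*((Ci i).card : ℝ)) := by nlinarith [h2]
        exact le_of_mul_le_mul_right e1' hpCi
      have e3 : B * ((k:ℝ)*p*c) * n ≤ 4 * n * n := by
        have e4 : B * ((k:ℝ)*p*c) * n ≤ B * (k:ℝ) * p * ((Ci i).card : ℝ) := by
          have e5 : B * ((k:ℝ)*p) * (c * n) ≤ B * ((k:ℝ)*p) * ((Ci i).card : ℝ) := by
            apply mul_le_mul_of_nonneg_left (hCi_ge i)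
            positivity
          nlinarith [e5]
        linarith
      have := le_of_mul_le_mul_right (by nlinarith [e3] :
        (B * ((k:ℝ)*p*c)) * n ≤ (4*n) * n) hn0
      exact this
    -- total bad count is less than C last
    set BU : Finset G := Finset.univ.biUnion bad with hBUdef
    have hBU : ((BU.card : ℝ)) * ((k:ℝ)*p*c) ≤ (t:ℝ) * (4*n) := by
      have h1 : (BU.card : ℝ) ≤ ∑ i : Fin t, ((bad i).card : ℝ) := by
        exact_mod_cast Finset.card_biUnion_le
      calc (BU.card : ℝ) * ((k:ℝ)*p*c) ≤ (∑ i : Fin t, ((bad i).card : ℝ)) * ((k:ℝ)*p*c) :=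
            mul_le_mul_of_nonneg_right h1 (le_of_lt hkpc)
        _ = ∑ i : Fin t, ((bad i).card : ℝ) * ((k:ℝ)*p*c) := by rw [Finset.sum_mul]
        _ ≤ ∑ _i : Fin t, 4*n := Finset.sum_le_sum (fun i _ => hbadi i)
        _ = (t:ℝ) * (4*n) := by rw [Finset.sum_const, nsmul_eq_mul]; simp
    have hkey_top : 4*(t:ℝ) < (k:ℝ) * p * c^2 := by
      have := hkey (t+1) (by omega) (le_refl _)
      simpa using this
    have hBU_lt : (BU.card : ℝ) < ((C last).card : ℝ) := by
      have h2 : (BU.card : ℝ) * ((k:ℝ)*p*c) < ((C last).card : ℝ) * ((k:ℝ)*p*c) := by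
        calc (BU.card : ℝ) * ((k:ℝ)*p*c) ≤ (t:ℝ) * (4*n) := hBU
          _ < ((k:ℝ) * p * c^2) * n := by nlinarith [hkey_top]
          _ = (c * n) * ((k:ℝ)*p*c) := by ring
          _ ≤ ((C last).card : ℝ) * ((k:ℝ)*p*c) :=
              mul_le_mul_of_nonneg_right (hC last) (le_of_lt hkpc)
      exact lt_of_mul_lt_mul_right h2 (le_of_lt hkpc)
    have hex : ∃ ystar, ystar ∈ C last \ BU := by
      apply Finset.card_pos.mp
      have h3 : BU.card < (C last).card := by exact_mod_cast hBU_lt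
      have h4 := Finset.le_card_sdiff BU (C last)
      omega
    obtain ⟨ystar, hystar⟩ := hex
    rw [Finset.mem_sdiff] at hystar
    obtain ⟨hyC, hyNB⟩ := hystar
    have hynotbad : ∀ i, ystar ∉ bad i := by
      intro i hin
      exact hyNB (Finset.mem_biUnion.mpr ⟨i, Finset.mem_univ i, hin⟩)
    -- the refined sets
    set C' : Fin t → Finset G := fun i => (Ci i).filter fun x => x * ystar⁻¹ ∈ Di i with hC'def
    have hC'card : ∀ i, (p*c/2) * n ≤ ((C' i).card : ℝ) := by
      intro i
      have h5 := hynotbad i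
      rw [hbaddef, Finset.mem_filter] at h5
      push_neg at h5
      have h6 : ((Di i).card : ℝ)/n * (Ci i).card / 2 < (cnt (Ci i) (Di i) ystar : ℝ) :=
        h5 (Finset.mem_univ _)
      rw [hβeq i] at h6
      have h7 : ((C' i).card : ℝ) = (cnt (Ci i) (Di i) ystar : ℝ) := by rfl
      rw [h7]
      have h8 : p * (c * n) / 2 ≤ p * ((Ci i).card : ℝ) / 2 := by
        have := mul_le_mul_of_nonneg_left (hCi_ge i) (le_of_lt hp0)
        linarith
      calc (p*c/2) * n = p * (c * n) / 2 := by ring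
        _ ≤ p * ((Ci i).card : ℝ) / 2 := h8
        _ ≤ (cnt (Ci i) (Di i) ystar : ℝ) := le_of_lt h6
    set A' : Fin t → Fin t → Finset G := fun i j => A i.castSucc j.castSucc with hA'def
    have hA' : ∀ i j : Fin t, i < j → ((A' i j).card : ℝ) = p * n := by
      intro i j hij
      exact hA i.castSucc j.castSucc (by rwa [Fin.castSucc_lt_castSucc_iff])
    have hkey' : ∀ s : ℕ, 2 ≤ s → s ≤ t →
        4*((s:ℝ)-1) * 4^(t-s) < (k:ℝ) * p^(2*(t-s)+1) * (p*c/2)^2 := by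
      intro s hs2 hst
      have h9 := hkey s hs2 (by omega)
      obtain ⟨u, hu⟩ := Nat.exists_eq_add_of_le hst
      have hts : t - s = u := by omega
      have hts1 : t + 1 - s = u + 1 := by omega
      rw [hts1] at h9
      rw [hts]
      have hp4 : (4:ℝ)^(u+1) = 4 * 4^u := by rw [pow_succ]; ring
      rw [hp4, show 2*(u+1)+1 = (2*u+1)+2 from by omega, pow_add] at h9
      nlinarith [h9]
    obtain ⟨y', hy'mem, hy'pairs⟩ :=
      IH (p*c/2) (by positivity) C' A' hC'card hA' hkey'
    -- assemble
    refine ⟨Fin.snoc y' ystar, ?_, ?_⟩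
    · intro i
      refine Fin.lastCases ?_ ?_ i
      · rw [Fin.snoc_last]; exact hyC
      · intro i'
        rw [Fin.snoc_castSucc]
        have := hy'mem i'
        rw [hC'def] at this
        exact Finset.mem_of_mem_filter _ this
    · intro i j
      refine Fin.lastCases ?_ ?_ j
      · -- j = last
        intro hij
        have hine : i ≠ Fin.last t := ne_of_lt hij
        obtain ⟨i', rfl⟩ := Fin.exists_castSucc_eq.mpr hine
        rw [Fin.snoc_castSucc, Fin.snoc_last]
        have hmem := hy'mem i'
        rw [hC'def, Finset.mem_filter] at hmem
        exact hmem.2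
      · -- j = castSucc j'
        intro j' hij
        have hine : i ≠ Fin.last t := by
          intro h
          rw [h] at hij
          simp only [Fin.lt_def, Fin.coe_castSucc, Fin.val_last] at hij
          have := j'.isLt
          omega
        obtain ⟨i', rfl⟩ := Fin.exists_castSucc_eq.mpr hine
        rw [Fin.snoc_castSucc, Fin.snoc_castSucc]
        exact hy'pairs i' j' (by rwa [Fin.castSucc_lt_castSucc_iff] at hij)
end
end Gowers

/-- Theorem 5.6 (Gowers, Quasirandom Groups): if every nontrivial complex
representation of a finite group `G` of order `n` has dimension at least `k`,
`m ≥ 2`, each `A_{ij} ⊆ G` (for `i < j`) has density `p`, and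
`p^{2m−3} ≥ 2^{3m}/k`, then there exist `x₁, …, x_m ∈ G` with `xᵢxⱼ⁻¹ ∈ A_{ij}`
for every `i < j`. -/
theorem simultaneous_pair_quotients
    (G : Type) [Group G] [Fintype G] (k : ℕ) (hk0 : 0 < k)
    (hrep : ∀ (d : ℕ) (ρ : G →* Matrix.GeneralLinearGroup (Fin d) ℂ),
      (∃ g, ρ g ≠ 1) → k ≤ d)
    (m : ℕ) (hm : 2 ≤ m) (A : Fin m → Fin m → Finset G) (p : ℝ)
    (hA : ∀ i j : Fin m, i < j → ((A i j).card : ℝ) = p * Fintype.card G)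
    (hp : (2 : ℝ) ^ (3 * m) / (k : ℝ) ≤ p ^ (2 * m - 3)) :
    ∃ x : Fin m → G, ∀ i j : Fin m, i < j → x i * (x j)⁻¹ ∈ A i j := by
  letI : DecidableEq G := Classical.decEq G
  have hn0 : (0:ℝ) < (Fintype.card G : ℝ) := by exact_mod_cast Fintype.card_pos
  have hk' : (0:ℝ) < (k:ℝ) := by exact_mod_cast hk0
  obtain ⟨t, rfl⟩ : ∃ t, m = t + 1 := ⟨m - 1, by omega⟩
  have ht : 1 ≤ t := by omega
  -- basic facts about p
  have hcard01 : ((A ⟨0, by omega⟩ ⟨1, by omega⟩).card : ℝ) = p * Fintype.card G :=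
    hA ⟨0, by omega⟩ ⟨1, by omega⟩ (by simp [Fin.lt_def])
  have hp_nonneg : 0 ≤ p := by
    by_contra hneg
    push_neg at hneg
    have : p * (Fintype.card G : ℝ) < 0 := mul_neg_of_neg_of_pos hneg hn0
    rw [← hcard01] at this
    exact absurd this (not_lt.mpr (Nat.cast_nonneg _))
  have hppow_pos : (0:ℝ) < p ^ (2 * (t+1) - 3) := by
    have h1 : (0:ℝ) < (2:ℝ) ^ (3 * (t+1)) / k := by positivity
    linarith [hp]
  have hp0 : 0 < p := by
    rcases lt_or_eq_of_le hp_nonneg with h | h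
    · exact h
    · exfalso
      rw [← h] at hppow_pos
      rw [zero_pow (by omega : 2 * (t+1) - 3 ≠ 0)] at hppow_pos
      exact lt_irrefl 0 hppow_pos
  have hp1 : p ≤ 1 := by
    have h2 : ((A ⟨0, by omega⟩ ⟨1, by omega⟩).card : ℝ) ≤ (Fintype.card G : ℝ) := by
      exact_mod_cast Finset.card_le_univ _
    rw [hcard01] at h2
    nlinarith
  -- the key quantitative hypothesis
  have hkmain : (2:ℝ)^(3*t+3) ≤ (k:ℝ) * p^(2*t-1) := by
    have h3 := hp
    rw [show 3*(t+1) = 3*t+3 from by omega, show 2*(t+1)-3 = 2*t-1 from by omega] at h3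
    rw [div_le_iff₀ hk'] at h3
    linarith [h3]
  -- set up the reduction to t sets
  set lastF : Fin (t+1) := Fin.last t with hlastdef
  set C : Fin t → Finset G := fun i => A i.castSucc lastF with hCdef
  set A' : Fin t → Fin t → Finset G := fun i j => A i.castSucc j.castSucc with hA'def
  have hC : ∀ i : Fin t, p * (Fintype.card G : ℝ) ≤ ((C i).card : ℝ) := by
    intro i
    exact le_of_eq (hA i.castSucc lastF (Fin.castSucc_lt_last i)).symm
  have hA'dens : ∀ i j : Fin t, i < j → ((A' i j).card : ℝ) = p * (Fintype.card G : ℝ) := by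
    intro i j hij
    exact hA i.castSucc j.castSucc (by rwa [Fin.castSucc_lt_castSucc_iff])
  have hkey : ∀ s : ℕ, 2 ≤ s → s ≤ t →
      4*((s:ℝ)-1) * 4^(t-s) < (k:ℝ) * p^(2*(t-s)+1) * p^2 := by
    intro s hs2 hst
    -- left side is < 2^(3t+3)
    have e1 : ((s:ℝ)-1) ≤ (t:ℝ) := by
      have : (s:ℝ) ≤ (t:ℝ)+1 := by exact_mod_cast (by omega : s ≤ t+1)
      linarith
    have e2 : (4:ℝ)^(t-s) ≤ 4^t := pow_le_pow_right₀ (by norm_num) (by omega)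
    have e3 : (t:ℝ) < 2^t := by exact_mod_cast Nat.lt_two_pow_self
    have hs1 : (0:ℝ) ≤ (s:ℝ)-1 := by
      have : (2:ℝ) ≤ (s:ℝ) := by exact_mod_cast hs2
      linarith
    have h4t : (0:ℝ) < 4^t := by positivity
    have h2t : (0:ℝ) < 2^t := by positivity
    have l1 : 4*((s:ℝ)-1)*4^(t-s) ≤ 4*(t:ℝ)*4^t := by
      nlinarith [mul_le_mul e1 e2 (by positivity : (0:ℝ) ≤ (4:ℝ)^(t-s)) (by positivity : (0:ℝ) ≤ (t:ℝ))]
    have l2 : 4*(t:ℝ)*4^t < 4*2^t*4^t := by nlinarith [e3]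
    have h8 : (2:ℝ)^(3*t+3) = 8*(2^t*2^t*2^t) := by
      rw [show 3*t+3 = t+t+t+3 from by omega, pow_add, pow_add, pow_add]
      norm_num
      ring
    have h44 : (4:ℝ)^t = 2^t * 2^t := by
      rw [show (4:ℝ) = 2*2 by norm_num, mul_pow]
    have l3 : 4*(2:ℝ)^t*4^t < 2^(3*t+3) := by
      rw [h44, h8]
      nlinarith [h2t]
    -- right side is ≥ 2^(3t+3)
    have r1 : p^(2*t-1) ≤ p^(2*(t-s)+1+2) :=
      pow_le_pow_of_le_one (le_of_lt hp0) hp1 (by omega)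
    have r2 : (k:ℝ) * p^(2*(t-s)+1) * p^2 = (k:ℝ) * p^(2*(t-s)+1+2) := by
      rw [mul_assoc, ← pow_add]
    have r3 : (2:ℝ)^(3*t+3) ≤ (k:ℝ) * p^(2*(t-s)+1+2) := by
      calc (2:ℝ)^(3*t+3) ≤ (k:ℝ) * p^(2*t-1) := hkmain
        _ ≤ (k:ℝ) * p^(2*(t-s)+1+2) :=
            mul_le_mul_of_nonneg_left r1 (le_of_lt hk')
    rw [r2]
    linarith
  obtain ⟨y, hymem, hypairs⟩ := Gowers.IND k hk0 hrep p hp0 hp1 t ht p hp0 C A' hC hA'dens hkey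
  refine ⟨Fin.snoc y 1, ?_⟩
  intro i j
  refine Fin.lastCases ?_ ?_ j
  · -- j = last
    intro hij
    have hine : i ≠ Fin.last t := ne_of_lt hij
    obtain ⟨i', rfl⟩ := Fin.exists_castSucc_eq.mpr hine
    rw [Fin.snoc_castSucc, Fin.snoc_last]
    simpa using hymem i'
  · -- j = castSucc j'
    intro j' hij
    have hine : i ≠ Fin.last t := by
      intro h
      rw [h] at hij
      simp only [Fin.lt_def, Fin.coe_castSucc, Fin.val_last] at hij
      have := j'.isLt
      omega
    obtain ⟨i', rfl⟩ := Fin.exists_castSucc_eq.mpr hine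
    rw [Fin.snoc_castSucc, Fin.snoc_castSucc]
    exact hypairs i' j' (by rwa [Fin.castSucc_lt_castSucc_iff] at hij)
end
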